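/- arXiv:1601.03199 — 4 statements merged into one kernel-verified Lean document; each statement's English description precedes it below -/
import Mathlib

section
/- For all ν ≥ 0 and all x > 0 one has Ψ_ν²(x) + (1/x)·Ψ_ν(x) − 1 < 0, where Ψ_ν(x) = I_{ν+1}(x)/I_ν(x). -/
set_option maxHeartbeats 1000000

open Real Filter Topology
open Finset

noncomputable def cf (a : ℝ) (m : ℕ) : ℝ := 1 / (m.factorial * Real.Gamma ((m:ℝ) + a + 1))

lemma cf_pos {a : ℝ} (ha : 0 ≤ a) (m : ℕ) : 0 < cf a m := by
  unfold cf
  have h1 : (0:ℝ) < m.factorial := by positivity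
  have h2 : 0 < Real.Gamma ((m:ℝ) + a + 1) := Real.Gamma_pos_of_pos (by positivity)
  positivity

lemma gamma_lb {a : ℝ} (ha : 0 ≤ a) (m : ℕ) :
    Real.Gamma (a + 1) * m.factorial ≤ Real.Gamma ((m:ℝ) + a + 1) := by
  induction m with
  | zero => simp
  | succ n ih =>
    have h0 : ((n:ℝ) + a + 1) ≠ 0 := by positivity
    have key : Real.Gamma (((n:ℝ)+1) + a + 1) = ((n:ℝ) + a + 1) * Real.Gamma ((n:ℝ) + a + 1) := by
      rw [show ((n:ℝ) + 1 + a + 1) = ((n:ℝ) + a + 1) + 1 by ring, Real.Gamma_add_one h0]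
    push_cast [Nat.factorial_succ]
    rw [key]
    have hΓ : 0 < Real.Gamma (a+1) := Real.Gamma_pos_of_pos (by positivity)
    have hfac : (0:ℝ) < n.factorial := by positivity
    calc Real.Gamma (a+1) * (((n:ℝ)+1) * n.factorial)
        = ((n:ℝ)+1) * (Real.Gamma (a+1) * n.factorial) := by ring
      _ ≤ ((n:ℝ)+a+1) * Real.Gamma ((n:ℝ)+a+1) := by
          apply mul_le_mul (by linarith) ih (by positivity) (by positivity)

lemma summable_cf {a : ℝ} (ha : 0 ≤ a) {y : ℝ} (hy : 0 ≤ y) :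
    Summable (fun m : ℕ => y ^ m * cf a m) := by
  have hΓ : 0 < Real.Gamma (a+1) := Real.Gamma_pos_of_pos (by positivity)
  apply Summable.of_nonneg_of_le (fun m => by have := cf_pos ha m; positivity)
    (f := fun m => (1/Real.Gamma (a+1)) * (y ^ m / m.factorial))
  · intro m
    have h1 : (1:ℝ) ≤ m.factorial := by exact_mod_cast Nat.one_le_iff_ne_zero.mpr m.factorial_ne_zero
    have h2 : Real.Gamma (a+1) ≤ Real.Gamma ((m:ℝ)+a+1) := by
      calc Real.Gamma (a+1) = Real.Gamma (a+1) * 1 := by ring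
        _ ≤ Real.Gamma (a+1) * m.factorial := by nlinarith
        _ ≤ _ := gamma_lb ha m
    unfold cf
    rw [mul_one_div, one_div_mul_eq_div, div_div]
    apply div_le_div_of_nonneg_left (by positivity) (by positivity)
    nlinarith
  · exact ((Real.summable_pow_div_factorial y).mul_left _)

noncomputable def gs (a y : ℝ) : ℝ := ∑' m : ℕ, y ^ m * cf a m

lemma gs_pos {a : ℝ} (ha : 0 ≤ a) {y : ℝ} (hy : 0 ≤ y) : 0 < gs a y := by
  apply Summable.tsum_pos (summable_cf ha hy) (fun m => by have := cf_pos ha m; positivity) 0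
  simpa using cf_pos ha 0

/-- The modified Bessel function of the first kind of real order `ν`. -/
noncomputable def besselI (ν x : ℝ) : ℝ :=
  ∑' m : ℕ, (x / 2) ^ (2 * (m : ℝ) + ν) / ((m.factorial : ℝ) * Real.Gamma ((m : ℝ) + ν + 1))

lemma besselI_eq {ν x : ℝ} (hx : 0 < x) :
    besselI ν x = (x/2) ^ ν * gs ν ((x/2)^2) := by
  have ht : 0 < x/2 := by linarith
  unfold besselI gs
  rw [← tsum_mul_left]
  congr 1
  funext m
  have h1 : (x/2) ^ (2 * (m:ℝ) + ν) = ((x/2)^2)^m * (x/2)^ν := by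
    rw [Real.rpow_add ht]
    congr 1
    rw [show (2 * (m:ℝ)) = ((2*m : ℕ) : ℝ) by push_cast; ring, Real.rpow_natCast, pow_mul]
  rw [h1]
  unfold cf
  ring

noncomputable def conv (a b : ℝ) (k : ℕ) : ℝ := ∑ m ∈ range (k+1), cf a m * cf b (k - m)

lemma conv_pos {a b : ℝ} (ha : 0 ≤ a) (hb : 0 ≤ b) (k : ℕ) : 0 < conv a b k := by
  apply Finset.sum_pos (fun m _ => mul_pos (cf_pos ha m) (cf_pos hb (k-m)))
  exact ⟨0, by simp⟩

lemma norm_summable_cf {a : ℝ} (ha : 0 ≤ a) {y : ℝ} (hy : 0 ≤ y) :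
    Summable (fun m : ℕ => ‖y ^ m * cf a m‖) := by
  have := summable_cf ha hy
  refine this.congr fun m => ?_
  symm
  rw [Real.norm_eq_abs, abs_of_nonneg (by have := cf_pos ha m; positivity)]

lemma gs_mul {a b : ℝ} (ha : 0 ≤ a) (hb : 0 ≤ b) {y : ℝ} (hy : 0 ≤ y) :
    gs a y * gs b y = ∑' k : ℕ, y ^ k * conv a b k := by
  unfold gs
  rw [tsum_mul_tsum_eq_tsum_sum_range_of_summable_norm (norm_summable_cf ha hy)
    (norm_summable_cf hb hy)]
  congr 1
  funext k
  unfold conv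
  rw [Finset.mul_sum]
  apply Finset.sum_congr rfl
  intro m hm
  have hmk : m ≤ k := Nat.lt_succ_iff.mp (Finset.mem_range.mp hm)
  have : y ^ m * y ^ (k - m) = y ^ k := by
    rw [← pow_add, Nat.add_sub_cancel' hmk]
  calc y ^ m * cf a m * (y ^ (k-m) * cf b (k-m))
      = (y ^ m * y ^ (k-m)) * (cf a m * cf b (k-m)) := by ring
    _ = y ^ k * (cf a m * cf b (k-m)) := by rw [this]

lemma summable_conv {a b : ℝ} (ha : 0 ≤ a) (hb : 0 ≤ b) {y : ℝ} (hy : 0 ≤ y) :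
    Summable (fun k : ℕ => y ^ k * conv a b k) := by
  have h := summable_sum_mul_range_of_summable_norm' (norm_summable_cf ha hy)
    (summable_cf ha hy) (norm_summable_cf hb hy) (summable_cf hb hy)
  refine h.congr fun k => ?_
  unfold conv
  rw [Finset.mul_sum]
  apply Finset.sum_congr rfl
  intro m hm
  have hmk : m ≤ k := Nat.lt_succ_iff.mp (Finset.mem_range.mp hm)
  have : y ^ m * y ^ (k - m) = y ^ k := by
    rw [← pow_add, Nat.add_sub_cancel' hmk]
  calc y ^ m * cf a m * (y ^ (k-m) * cf b (k-m))
      = (y ^ m * y ^ (k-m)) * (cf a m * cf b (k-m)) := by ring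
    _ = y ^ k * (cf a m * cf b (k-m)) := by rw [this]

lemma cf_succ (a : ℝ) (m : ℕ) : ((m:ℝ)+1) * cf a (m+1) = cf (a+1) m := by
  unfold cf
  rw [Nat.factorial_succ]
  push_cast
  rw [show ((m:ℝ)+1+a+1) = (m:ℝ)+(a+1)+1 by ring]
  have h1 : ((m:ℝ)+1) ≠ 0 := by positivity
  rw [mul_one_div, show ((m:ℝ)+1) * (m.factorial) * Real.Gamma ((m:ℝ)+(a+1)+1)
    = ((m:ℝ)+1) * ((m.factorial) * Real.Gamma ((m:ℝ)+(a+1)+1)) by ring,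
    div_mul_cancel_left₀ h1, one_div]

lemma conv_pascal (a b : ℝ) (k : ℕ) :
    ((k:ℝ)+1) * conv a b (k+1) = conv (a+1) b k + conv a (b+1) k := by
  unfold conv
  rw [Finset.mul_sum]
  have key : ∀ m ∈ range (k+2), ((k:ℝ)+1) * (cf a m * cf b (k+1-m)) =
      ((m:ℝ) * (cf a m * cf b (k+1-m))) + (((k+1-m : ℕ):ℝ) * (cf a m * cf b (k+1-m))) := by
    intro m hm
    have hmk : m ≤ k+1 := Nat.lt_succ_iff.mp (Finset.mem_range.mp hm)
    have : ((k+1-m : ℕ):ℝ) = (k:ℝ)+1-(m:ℝ) := by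
      push_cast [Nat.cast_sub hmk]; ring
    rw [this]; ring
  rw [Finset.sum_congr rfl key, Finset.sum_add_distrib]
  congr 1
  · -- first sum equals conv (a+1) b k
    rw [Finset.sum_range_succ' (fun m => (m:ℝ) * (cf a m * cf b (k+1-m))) (k+1)]
    simp only [Nat.cast_zero, zero_mul, add_zero]
    apply Finset.sum_congr rfl
    intro m hm
    have hmk : m ≤ k := Nat.lt_succ_iff.mp (Finset.mem_range.mp hm)
    have h1 : k + 1 - (m+1) = k - m := by omega
    rw [h1]
    push_cast
    rw [show ((m:ℝ)+1) * (cf a (m+1) * cf b (k-m)) = (((m:ℝ)+1) * cf a (m+1)) * cf b (k-m) by ring,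
      cf_succ]
  · -- second sum equals conv a (b+1) k
    rw [Finset.sum_range_succ]
    simp only [Nat.sub_self, Nat.cast_zero, zero_mul, add_zero]
    apply Finset.sum_congr rfl
    intro m hm
    have hmk : m ≤ k := Nat.lt_succ_iff.mp (Finset.mem_range.mp hm)
    have h1 : k + 1 - m = (k - m) + 1 := by omega
    rw [h1]
    push_cast
    rw [show (((k-m:ℕ):ℝ)+1) * (cf a m * cf b ((k-m)+1)) =
      cf a m * ((((k-m:ℕ):ℝ)+1) * cf b ((k-m)+1)) by ring, cf_succ]

lemma conv_eq : ∀ (k : ℕ) (a b : ℝ), 0 ≤ a → 0 ≤ b →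
    conv a b k = Real.Gamma (a+b+2*(k:ℝ)+1) /
      (k.factorial * Real.Gamma (a+(k:ℝ)+1) * Real.Gamma (b+(k:ℝ)+1) *
        Real.Gamma (a+b+(k:ℝ)+1)) := by
  intro k
  induction k with
  | zero =>
    intro a b ha hb
    have hA : 0 < Real.Gamma (a+1) := Real.Gamma_pos_of_pos (by positivity)
    have hB : 0 < Real.Gamma (b+1) := Real.Gamma_pos_of_pos (by positivity)
    have hC : 0 < Real.Gamma (a+b+1) := Real.Gamma_pos_of_pos (by positivity)
    have h0 : conv a b 0 = (1/Real.Gamma (a+1)) * (1/Real.Gamma (b+1)) := by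
      unfold conv cf
      simp
    rw [h0, show (a+b+2*((0:ℕ):ℝ)+1) = a+b+1 by push_cast; ring,
      show a+((0:ℕ):ℝ)+1 = a+1 by push_cast; ring,
      show b+((0:ℕ):ℝ)+1 = b+1 by push_cast; ring,
      show a+b+((0:ℕ):ℝ)+1 = a+b+1 by push_cast; ring]
    rw [Nat.factorial_zero]
    field_simp
    norm_num
  | succ k ih =>
    intro a b ha hb
    have h1 := ih (a+1) b (by linarith) hb
    have h2 := ih a (b+1) ha (by linarith)
    have hk1 : (0:ℝ) < (k:ℝ) + 1 := by positivity
    have pA : 0 < Real.Gamma (a+(k:ℝ)+1) := Real.Gamma_pos_of_pos (by positivity)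
    have pB : 0 < Real.Gamma (b+(k:ℝ)+1) := Real.Gamma_pos_of_pos (by positivity)
    have pC : 0 < Real.Gamma (a+b+(k:ℝ)+1) := Real.Gamma_pos_of_pos (by positivity)
    have pX : 0 < Real.Gamma (a+b+2*(k:ℝ)+2) := Real.Gamma_pos_of_pos (by positivity)
    have pF : (0:ℝ) < k.factorial := by positivity
    -- clean rewrites for h1
    have e1 : Real.Gamma ((a+1)+b+2*(k:ℝ)+1) = Real.Gamma (a+b+2*(k:ℝ)+2) := by
      rw [show (a+1)+b+2*(k:ℝ)+1 = a+b+2*(k:ℝ)+2 by ring]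
    have e2 : Real.Gamma ((a+1)+(k:ℝ)+1) = (a+(k:ℝ)+1) * Real.Gamma (a+(k:ℝ)+1) := by
      rw [show (a+1)+(k:ℝ)+1 = (a+(k:ℝ)+1)+1 by ring]
      exact Real.Gamma_add_one (by positivity)
    have e3 : Real.Gamma ((a+1)+b+(k:ℝ)+1) = (a+b+(k:ℝ)+1) * Real.Gamma (a+b+(k:ℝ)+1) := by
      rw [show (a+1)+b+(k:ℝ)+1 = (a+b+(k:ℝ)+1)+1 by ring]
      exact Real.Gamma_add_one (by positivity)
    rw [e1, e2, e3] at h1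
    have f1 : Real.Gamma (a+(b+1)+2*(k:ℝ)+1) = Real.Gamma (a+b+2*(k:ℝ)+2) := by
      rw [show a+(b+1)+2*(k:ℝ)+1 = a+b+2*(k:ℝ)+2 by ring]
    have f2 : Real.Gamma ((b+1)+(k:ℝ)+1) = (b+(k:ℝ)+1) * Real.Gamma (b+(k:ℝ)+1) := by
      rw [show (b+1)+(k:ℝ)+1 = (b+(k:ℝ)+1)+1 by ring]
      exact Real.Gamma_add_one (by positivity)
    have f3 : Real.Gamma (a+(b+1)+(k:ℝ)+1) = (a+b+(k:ℝ)+1) * Real.Gamma (a+b+(k:ℝ)+1) := by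
      rw [show a+(b+1)+(k:ℝ)+1 = (a+b+(k:ℝ)+1)+1 by ring]
      exact Real.Gamma_add_one (by positivity)
    rw [f1, f2, f3] at h2
    have hpas := conv_pascal a b k
    have hconv : conv a b (k+1) = (conv (a+1) b k + conv a (b+1) k) / ((k:ℝ)+1) := by
      rw [← hpas, mul_comm, mul_div_assoc, div_self (ne_of_gt hk1), mul_one]
    -- goal rewrites
    have gX : Real.Gamma (a+b+2*(((k:ℕ)+1:ℕ):ℝ)+1)
        = (a+b+2*(k:ℝ)+2) * Real.Gamma (a+b+2*(k:ℝ)+2) := by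
      rw [show a+b+2*(((k:ℕ)+1:ℕ):ℝ)+1 = (a+b+2*(k:ℝ)+2)+1 by push_cast; ring]
      exact Real.Gamma_add_one (by positivity)
    have gA : Real.Gamma (a+(((k:ℕ)+1:ℕ):ℝ)+1) = (a+(k:ℝ)+1) * Real.Gamma (a+(k:ℝ)+1) := by
      rw [show a+(((k:ℕ)+1:ℕ):ℝ)+1 = (a+(k:ℝ)+1)+1 by push_cast; ring]
      exact Real.Gamma_add_one (by positivity)
    have gB : Real.Gamma (b+(((k:ℕ)+1:ℕ):ℝ)+1) = (b+(k:ℝ)+1) * Real.Gamma (b+(k:ℝ)+1) := by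
      rw [show b+(((k:ℕ)+1:ℕ):ℝ)+1 = (b+(k:ℝ)+1)+1 by push_cast; ring]
      exact Real.Gamma_add_one (by positivity)
    have gC : Real.Gamma (a+b+(((k:ℕ)+1:ℕ):ℝ)+1)
        = (a+b+(k:ℝ)+1) * Real.Gamma (a+b+(k:ℝ)+1) := by
      rw [show a+b+(((k:ℕ)+1:ℕ):ℝ)+1 = (a+b+(k:ℝ)+1)+1 by push_cast; ring]
      exact Real.Gamma_add_one (by positivity)
    rw [hconv, h1, h2, gX, gA, gB, gC, Nat.factorial_succ]
    push_cast
    field_simp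
    ring

lemma coef_ineq {ν : ℝ} (hν : 0 ≤ ν) (k : ℕ) :
    2 * conv (ν+1) (ν+1) k ≤ 2 * conv ν ν (k+1) - conv ν (ν+1) (k+1) := by
  set K : ℝ := (k : ℝ) with hK
  have hK0 : 0 ≤ K := Nat.cast_nonneg k
  have c1 := conv_eq (k+1) ν ν hν hν
  have c2 := conv_eq (k+1) ν (ν+1) hν (by linarith)
  have c3 := conv_eq k (ν+1) (ν+1) (by linarith) (by linarith)
  -- canonicalize c1
  rw [show ν+ν+2*(((k+1):ℕ):ℝ)+1 = 2*ν+2*K+3 by push_cast; ring,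
      show ν+(((k+1):ℕ):ℝ)+1 = ν+K+2 by push_cast; ring,
      show ν+ν+(((k+1):ℕ):ℝ)+1 = 2*ν+K+2 by push_cast; ring] at c1
  -- canonicalize c2
  have u1 : Real.Gamma (ν+(ν+1)+2*(((k+1):ℕ):ℝ)+1)
      = (2*ν+2*K+3) * Real.Gamma (2*ν+2*K+3) := by
    rw [show ν+(ν+1)+2*(((k+1):ℕ):ℝ)+1 = (2*ν+2*K+3)+1 by push_cast; ring]
    exact Real.Gamma_add_one (by positivity)
  have u2 : Real.Gamma ((ν+1)+(((k+1):ℕ):ℝ)+1) = (ν+K+2) * Real.Gamma (ν+K+2) := by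
    rw [show (ν+1)+(((k+1):ℕ):ℝ)+1 = (ν+K+2)+1 by push_cast; ring]
    exact Real.Gamma_add_one (by positivity)
  have u3 : Real.Gamma (ν+(ν+1)+(((k+1):ℕ):ℝ)+1) = (2*ν+K+2) * Real.Gamma (2*ν+K+2) := by
    rw [show ν+(ν+1)+(((k+1):ℕ):ℝ)+1 = (2*ν+K+2)+1 by push_cast; ring]
    exact Real.Gamma_add_one (by positivity)
  rw [u1, u2, u3, show ν+(((k+1):ℕ):ℝ)+1 = ν+K+2 by push_cast; ring] at c2
  -- canonicalize c3
  have v1 : Real.Gamma ((ν+1)+(ν+1)+(K:ℝ)+1) = (2*ν+K+2) * Real.Gamma (2*ν+K+2) := by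
    rw [show (ν+1)+(ν+1)+(K:ℝ)+1 = (2*ν+K+2)+1 by ring]
    exact Real.Gamma_add_one (by positivity)
  rw [show (ν+1)+(ν+1)+2*(K:ℝ)+1 = 2*ν+2*K+3 by ring,
      show (ν+1)+(K:ℝ)+1 = ν+K+2 by ring, v1] at c3
  -- positivity of atoms
  have pP : 0 < Real.Gamma (2*ν+2*K+3) := Real.Gamma_pos_of_pos (by positivity)
  have pQ : 0 < Real.Gamma (ν+K+2) := Real.Gamma_pos_of_pos (by positivity)
  have pR : 0 < Real.Gamma (2*ν+K+2) := Real.Gamma_pos_of_pos (by positivity)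
  have pF : (0:ℝ) < k.factorial := by positivity
  have hfs : (((k+1).factorial : ℕ):ℝ) = (K+1) * k.factorial := by
    rw [Nat.factorial_succ]; push_cast; ring
  rw [hfs] at c1 c2
  have main : 2 * conv ν ν (k+1) - conv ν (ν+1) (k+1) - 2 * conv (ν+1) (ν+1) k
      = (4*ν^2+4*ν*K+8*ν+1) * Real.Gamma (2*ν+2*K+3) /
        ((K+1) * k.factorial * Real.Gamma (ν+K+2)^2 *
          ((ν+K+2)*(2*ν+K+2)*Real.Gamma (2*ν+K+2))) := by
    rw [c1, c2, c3]
    field_simp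
    ring
  nlinarith [div_pos (by positivity : (0:ℝ) < (4*ν^2+4*ν*K+8*ν+1) * Real.Gamma (2*ν+2*K+3))
    (by positivity : (0:ℝ) < (K+1) * k.factorial * Real.Gamma (ν+K+2)^2 *
      ((ν+K+2)*(2*ν+K+2)*Real.Gamma (2*ν+K+2))), main]

lemma key_pos {ν y : ℝ} (hν : 0 ≤ ν) (hy : 0 ≤ y) :
    0 < 2 * (gs ν y)^2 - gs ν y * gs (ν+1) y - 2 * y * (gs (ν+1) y)^2 := by
  have hν1 : (0:ℝ) ≤ ν + 1 := by linarith
  have sAA := summable_conv hν hν hy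
  have sAC := summable_conv hν hν1 hy
  have sBB := summable_conv hν1 hν1 hy
  set e : ℕ → ℝ := fun k => 2 * (y^k * conv ν ν k) - y^k * conv ν (ν+1) k with he
  have sE : Summable e := (sAA.mul_left 2).sub sAC
  have h2F : 2 * (gs ν y)^2 - gs ν y * gs (ν+1) y = ∑' k, e k := by
    rw [pow_two, gs_mul hν hν hy, gs_mul hν hν1 hy, ← tsum_mul_left, ← Summable.tsum_sub (sAA.mul_left 2) sAC]
  have hGG : 2 * y * (gs (ν+1) y)^2 = ∑' k, 2 * y^(k+1) * conv (ν+1) (ν+1) k := by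
    rw [pow_two, gs_mul hν1 hν1 hy, ← tsum_mul_left]
    congr 1; funext k; ring
  have hsplit : ∑' k, e k = e 0 + ∑' k, e (k+1) := Summable.tsum_eq_zero_add sE
  have hs1 : Summable (fun k => e (k+1)) := (summable_nat_add_iff 1).2 sE
  have hs2 : Summable (fun k => 2 * y^(k+1) * conv (ν+1) (ν+1) k) := by
    refine (sBB.mul_left (2*y)).congr fun k => ?_
    ring
  have hcomp : ∀ k, 2 * y^(k+1) * conv (ν+1) (ν+1) k ≤ e (k+1) := by
    intro k
    have h := coef_ineq hν k
    have hyk : (0:ℝ) ≤ y^(k+1) := by positivity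
    have : e (k+1) = y^(k+1) * (2 * conv ν ν (k+1) - conv ν (ν+1) (k+1)) := by
      simp only [he]; ring
    rw [this]
    calc 2 * y^(k+1) * conv (ν+1) (ν+1) k = y^(k+1) * (2 * conv (ν+1) (ν+1) k) := by ring
      _ ≤ y^(k+1) * (2 * conv ν ν (k+1) - conv ν (ν+1) (k+1)) := by
          apply mul_le_mul_of_nonneg_left h hyk
  have hle : ∑' k, 2 * y^(k+1) * conv (ν+1) (ν+1) k ≤ ∑' k, e (k+1) :=
    Summable.tsum_le_tsum hcomp hs2 hs1
  have he0 : 0 < e 0 := by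
    have hA := conv_pos hν hν 0
    have c1 : conv ν ν 0 = cf ν 0 * cf ν 0 := by unfold conv; simp
    have c2 : conv ν (ν+1) 0 = cf ν 0 * cf (ν+1) 0 := by unfold conv; simp
    have g1 : cf ν 0 = 1 / Real.Gamma (ν+1) := by
      unfold cf; norm_num
    have g2 : cf (ν+1) 0 = 1 / ((ν+1) * Real.Gamma (ν+1)) := by
      unfold cf
      norm_num
      rw [show (ν+1+1 : ℝ) = (ν+1)+1 by ring, Real.Gamma_add_one (by positivity)]
      rw [mul_inv, mul_comm]
    have hΓ : 0 < Real.Gamma (ν+1) := Real.Gamma_pos_of_pos (by positivity)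
    have : e 0 = (2 - 1/(ν+1)) * (1/Real.Gamma (ν+1))^2 := by
      simp only [he, pow_zero, one_mul, c1, c2, g1, g2]
      field_simp
    rw [this]
    have : 1/(ν+1) ≤ 1 := by
      rw [div_le_one (by positivity)]; linarith
    have h2 : (0:ℝ) < 2 - 1/(ν+1) := by linarith
    positivity
  rw [h2F, hGG, hsplit]
  linarith

/-- `Ψ_ν(x) = I_{ν+1}(x) / I_ν(x)`. -/
noncomputable def psi (ν x : ℝ) : ℝ := besselI (ν + 1) x / besselI ν x

theorem stmt_11 (ν x : ℝ) (hν : 0 ≤ ν) (hx : 0 < x) :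
    (psi ν x) ^ 2 + (1 / x) * psi ν x - 1 < 0 := by
  have ht : 0 < x/2 := by linarith
  set t := x/2 with htdef
  have hy : (0:ℝ) ≤ t^2 := by positivity
  set y := t^2 with hydef
  have hF : 0 < gs ν y := gs_pos hν hy
  have hG : 0 < gs (ν+1) y := gs_pos (by linarith) hy
  have hBν : besselI ν x = t ^ ν * gs ν y := besselI_eq hx
  have hBν1 : besselI (ν+1) x = t ^ (ν+1) * gs (ν+1) y := besselI_eq hx
  have htν : (0:ℝ) < t ^ ν := Real.rpow_pos_of_pos ht ν
  have hpsi : psi ν x = t * gs (ν+1) y / gs ν y := by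
    unfold psi
    rw [hBν, hBν1, Real.rpow_add ht, Real.rpow_one]
    field_simp
  have key := key_pos hν hy
  have hx2 : x = 2*t := by rw [htdef]; ring
  rw [hpsi, hx2]
  set F := gs ν y with hFdef
  set G := gs (ν+1) y with hGdef
  have expand : (t*G/F)^2 + (1/(2*t))*(t*G/F) - 1
      = -(2*F^2 - F*G - 2*y*G^2)/(2*F^2) := by
    rw [hydef]
    field_simp
    ring
  rw [expand]
  apply div_neg_of_neg_of_pos
  · linarith
  · positivity
end

section
/- For all ν ≥ 1/2 and all x > 0 one has Ψ_ν²(x) + (2/x)·Ψ_ν(x) − 1 < 0, where Ψ_ν(x) = I_{ν+1}(x)/I_ν(x). -/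
open Real Filter Topology

namespace Stmt14Aux

/-- coefficient `α(μ, m) = 1 / (m! Γ(m+μ+1))` -/
noncomputable def al (μ : ℝ) (m : ℕ) : ℝ :=
  1 / ((m.factorial : ℝ) * Real.Gamma ((m : ℝ) + μ + 1))

lemma al_pos {μ : ℝ} (hμ : -1 < μ) (m : ℕ) : 0 < al μ m := by
  have h : (0:ℝ) < (m : ℝ) + μ + 1 := by
    have : (0:ℝ) ≤ (m:ℝ) := Nat.cast_nonneg m
    linarith
  have := Real.Gamma_pos_of_pos h
  have hf : (0:ℝ) < (m.factorial : ℝ) := by positivity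
  unfold al
  positivity

lemma succ_mul_al (μ : ℝ) (m : ℕ) :
    ((m:ℝ) + 1) * al μ (m + 1) = al (μ + 1) m := by
  unfold al
  have hf : ((m+1).factorial : ℝ) = ((m:ℝ)+1) * (m.factorial : ℝ) := by
    rw [Nat.factorial_succ]; push_cast; ring
  have harg : ((m+1 : ℕ) : ℝ) + μ + 1 = (m:ℝ) + (μ + 1) + 1 := by push_cast; ring
  rw [harg, hf]
  have h1 : ((m:ℝ)+1) ≠ 0 := by positivity
  have key := mul_div_mul_left (1:ℝ)
    ((m.factorial:ℝ) * Real.Gamma ((m:ℝ)+(μ+1)+1)) h1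
  calc ((m:ℝ) + 1) * (1 / (((m:ℝ)+1) * (m.factorial:ℝ) * Real.Gamma ((m:ℝ)+(μ+1)+1)))
      = (((m:ℝ)+1) * 1) / (((m:ℝ)+1) * ((m.factorial:ℝ) * Real.Gamma ((m:ℝ)+(μ+1)+1))) := by
        ring
    _ = 1 / ((m.factorial:ℝ) * Real.Gamma ((m:ℝ)+(μ+1)+1)) := key

lemma al_eq_succ {μ : ℝ} (hμ : -1 < μ) (m : ℕ) :
    al μ m = ((m:ℝ) + μ + 1) * al (μ + 1) m := by
  unfold al
  have h : (0:ℝ) < (m : ℝ) + μ + 1 := by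
    have : (0:ℝ) ≤ (m:ℝ) := Nat.cast_nonneg m
    linarith
  have hG : Real.Gamma ((m:ℝ) + (μ+1) + 1) = ((m:ℝ) + μ + 1) * Real.Gamma ((m:ℝ) + μ + 1) := by
    have : (m:ℝ) + (μ+1) + 1 = ((m:ℝ) + μ + 1) + 1 := by ring
    rw [this, Real.Gamma_add_one h.ne']
  rw [hG]
  have h1 : Real.Gamma ((m:ℝ) + μ + 1) ≠ 0 := (Real.Gamma_pos_of_pos h).ne'
  have hf : (m.factorial : ℝ) ≠ 0 := by positivity
  field_simp

/-- Cauchy-product coefficient of `g_μ g_σ`. -/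
noncomputable def CC (k : ℕ) (μ σ : ℝ) : ℝ :=
  ∑ m ∈ Finset.range (k+1), al μ m * al σ (k - m)

lemma CC_symm (k : ℕ) (μ σ : ℝ) : CC k μ σ = CC k σ μ := by
  unfold CC
  rw [← Finset.sum_range_reflect]
  apply Finset.sum_congr rfl
  intro m hm
  have hmk : m ≤ k := Nat.lt_succ_iff.mp (Finset.mem_range.mp hm)
  have h1 : k + 1 - 1 - m = k - m := by omega
  have h2 : k - (k - m) = m := Nat.sub_sub_self hmk
  rw [h1, h2, mul_comm]

lemma CC_pos {μ σ : ℝ} (hμ : -1 < μ) (hσ : -1 < σ) (k : ℕ) : 0 < CC k μ σ := by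
  unfold CC
  apply Finset.sum_pos
  · intro m _
    exact mul_pos (al_pos hμ m) (al_pos hσ _)
  · exact ⟨0, Finset.mem_range.mpr (Nat.succ_pos k)⟩

lemma sum_mul_shift (k : ℕ) (μ σ : ℝ) :
    ∑ m ∈ Finset.range (k+2), (m:ℝ) * (al μ m * al σ (k + 1 - m)) = CC k (μ+1) σ := by
  rw [Finset.sum_range_succ']
  simp only [Nat.cast_zero, zero_mul, add_zero]
  unfold CC
  apply Finset.sum_congr rfl
  intro m hm
  have h1 : k + 1 - (m + 1) = k - m := by omega
  rw [h1]
  push_cast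
  rw [← succ_mul_al μ m]
  ring

lemma CC_rec (k : ℕ) (μ σ : ℝ) :
    ((k:ℝ) + 1) * CC (k+1) μ σ = CC k (μ+1) σ + CC k μ (σ+1) := by
  have lhs : ((k:ℝ) + 1) * CC (k+1) μ σ
      = ∑ m ∈ Finset.range (k+2), ((k:ℝ)+1) * (al μ m * al σ (k+1-m)) := by
    unfold CC
    rw [Finset.mul_sum]
  have split : ∀ m ∈ Finset.range (k+2),
      ((k:ℝ)+1) * (al μ m * al σ (k+1-m))
      = (m:ℝ) * (al μ m * al σ (k+1-m)) + ((k+1-m : ℕ):ℝ) * (al μ m * al σ (k+1-m)) := by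
    intro m hm
    have hmk : m ≤ k + 1 := Nat.lt_succ_iff.mp (Finset.mem_range.mp hm)
    have : ((k+1-m : ℕ):ℝ) = (k:ℝ) + 1 - (m:ℝ) := by
      rw [Nat.cast_sub hmk]; push_cast; ring
    rw [this]; ring
  rw [lhs, Finset.sum_congr rfl split, Finset.sum_add_distrib]
  congr 1
  · exact sum_mul_shift k μ σ
  · -- reflect
    rw [← Finset.sum_range_reflect]
    calc ∑ m ∈ Finset.range (k+2),
          ((k+1-(k+2-1-m) : ℕ):ℝ) * (al μ (k+2-1-m) * al σ (k+1-(k+2-1-m)))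
        = ∑ m ∈ Finset.range (k+2), (m:ℝ) * (al σ m * al μ (k+1-m)) := by
          apply Finset.sum_congr rfl
          intro m hm
          have hmk : m ≤ k + 1 := Nat.lt_succ_iff.mp (Finset.mem_range.mp hm)
          have h1 : k + 2 - 1 - m = k + 1 - m := by omega
          have h2 : k + 1 - (k + 1 - m) = m := Nat.sub_sub_self hmk
          rw [h1, h2, mul_comm (al μ _)]
      _ = CC k (σ+1) μ := sum_mul_shift k σ μ
      _ = CC k μ (σ+1) := CC_symm k (σ+1) μ

/-- `2 C_k(μ, μ+1) = (k + 2μ + 2) C_k(μ+1, μ+1)` -/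
lemma CC_half {μ : ℝ} (hμ : -1 < μ) (k : ℕ) :
    2 * CC k μ (μ+1) = ((k:ℝ) + 2*μ + 2) * CC k (μ+1) (μ+1) := by
  have expand : CC k μ (μ+1)
      = ∑ m ∈ Finset.range (k+1), ((m:ℝ) + μ + 1) * (al (μ+1) m * al (μ+1) (k-m)) := by
    unfold CC
    apply Finset.sum_congr rfl
    intro m _
    rw [al_eq_succ hμ m]; ring
  have expand2 : CC k μ (μ+1)
      = ∑ m ∈ Finset.range (k+1), (((k-m : ℕ):ℝ) + μ + 1) * (al (μ+1) m * al (μ+1) (k-m)) := by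
    rw [CC_symm]
    unfold CC
    apply Finset.sum_congr rfl
    intro m _
    rw [al_eq_succ hμ (k-m)]; ring
  have key : 2 * CC k μ (μ+1)
      = ∑ m ∈ Finset.range (k+1),
          (((m:ℝ) + μ + 1) + (((k-m : ℕ):ℝ) + μ + 1)) * (al (μ+1) m * al (μ+1) (k-m)) := by
    rw [two_mul]
    nth_rewrite 1 [expand]
    nth_rewrite 1 [expand2]
    rw [← Finset.sum_add_distrib]
    apply Finset.sum_congr rfl
    intro m _; ring
  rw [key]
  unfold CC
  rw [Finset.mul_sum]
  apply Finset.sum_congr rfl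
  intro m hm
  have hmk : m ≤ k := Nat.lt_succ_iff.mp (Finset.mem_range.mp hm)
  have hc : ((k-m : ℕ):ℝ) = (k:ℝ) - (m:ℝ) := by rw [Nat.cast_sub hmk]
  rw [hc]; ring

/-- the cross-difference family is nonnegative -/
lemma D_nonneg {ν : ℝ} (hν : 0 < ν) :
    ∀ (k : ℕ) (a b : ℕ), a ≤ b + 1 →
      0 ≤ CC k (ν + 1 + a) (ν + 1 + b) - CC k (ν + a) (ν + 2 + b) := by
  intro k
  induction k with
  | zero =>
    intro a b hab
    unfold CC
    simp only [zero_add, Finset.sum_range_one, Nat.sub_zero]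
    unfold al
    simp only [Nat.factorial_zero, Nat.cast_one, Nat.cast_zero, one_mul, zero_add]
    have h1 : (0:ℝ) < ν + 1 + a + 1 := by positivity
    have h2 : (0:ℝ) < ν + 1 + b + 1 := by positivity
    have h3 : (0:ℝ) < ν + a + 1 := by positivity
    have h4 : (0:ℝ) < ν + 2 + b + 1 := by positivity
    have g1 := Real.Gamma_pos_of_pos h1
    have g2 := Real.Gamma_pos_of_pos h2
    have g3 := Real.Gamma_pos_of_pos h3
    have g4 := Real.Gamma_pos_of_pos h4
    rw [sub_nonneg, one_div_mul_one_div, one_div_mul_one_div,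
      div_le_div_iff₀ (by positivity) (by positivity), one_mul, one_mul]
    have e1 : Real.Gamma (ν + 1 + a + 1) = (ν + a + 1) * Real.Gamma (ν + a + 1) := by
      rw [show ν + 1 + (a:ℝ) + 1 = (ν + a + 1) + 1 by ring, Real.Gamma_add_one h3.ne']
    have e2 : Real.Gamma (ν + 2 + b + 1) = (ν + b + 2) * Real.Gamma (ν + 1 + b + 1) := by
      rw [show ν + 2 + (b:ℝ) + 1 = (ν + 1 + b + 1) + 1 by ring,
        Real.Gamma_add_one h2.ne']
      ring
    have hab' : (a:ℝ) ≤ (b:ℝ) + 1 := by exact_mod_cast hab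
    rw [e1, e2]
    nlinarith [mul_pos g3 g2]
  | succ k ih =>
    intro a b hab
    rcases Nat.lt_or_ge a (b+1) with hlt | hge
    · have hab2 : a ≤ b := Nat.lt_succ_iff.mp hlt
      have key1 : ((k:ℝ) + 1) * CC (k+1) (ν + 1 + a) (ν + 1 + b)
          = CC k (ν + 1 + a + 1) (ν + 1 + b) + CC k (ν + 1 + a) (ν + 1 + b + 1) :=
        CC_rec k _ _
      have key2 : ((k:ℝ) + 1) * CC (k+1) (ν + a) (ν + 2 + b)
          = CC k (ν + a + 1) (ν + 2 + b) + CC k (ν + a) (ν + 2 + b + 1) :=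
        CC_rec k _ _
      have h1 := ih (a+1) b (by omega)
      have h2 := ih a (b+1) (by omega)
      have c1 : (ν + 1 + ((a+1 : ℕ)) : ℝ) = ν + 1 + a + 1 := by push_cast; ring
      have c2 : (ν + ((a+1 : ℕ)) : ℝ) = ν + a + 1 := by push_cast; ring
      have c3 : (ν + 1 + ((b+1 : ℕ)) : ℝ) = ν + 1 + b + 1 := by push_cast; ring
      have c4 : (ν + 2 + ((b+1 : ℕ)) : ℝ) = ν + 2 + b + 1 := by push_cast; ring
      rw [c1, c2] at h1
      rw [c3, c4] at h2
      -- h1 : 0 ≤ CC k (ν+1+a+1) (ν+1+b) - CC k (ν+a+1) (ν+2+b)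
      -- h2 : 0 ≤ CC k (ν+1+a) (ν+1+b+1) - CC k (ν+a) (ν+2+b+1)
      have hmid : CC k (ν + 1 + (a:ℝ)) (ν + 1 + (b:ℝ) + 1) = CC k (ν + 1 + a) (ν + 2 + b) := by
        ring_nf
      have hk : (0:ℝ) < (k:ℝ) + 1 := by positivity
      nlinarith [key1, key2, h1, h2, hmid]
    · have ha : a = b + 1 := le_antisymm hab hge
      subst ha
      have e1 : (ν + 1 + ((b+1 : ℕ)) : ℝ) = ν + 2 + b := by push_cast; ring
      have e2 : (ν + ((b+1 : ℕ)) : ℝ) = ν + 1 + b := by push_cast; ring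
      rw [e1, e2, CC_symm]
      simp

/-- The series coefficient inequality: `r_{k+1} ≥ 0`. -/
lemma r_nonneg {ν : ℝ} (hν : 1/2 ≤ ν) (k : ℕ) :
    0 ≤ CC (k+1) ν ν - CC (k+1) ν (ν+1) - CC k (ν+1) (ν+1) := by
  have hν0 : (0:ℝ) < ν := by linarith
  have hν1 : (-1:ℝ) < ν := by linarith
  have hν2 : (-1:ℝ) < ν + 1 := by linarith
  have key1 : ((k:ℝ) + 1) * CC (k+1) ν ν = CC k (ν+1) ν + CC k ν (ν+1) := CC_rec k ν ν
  rw [CC_symm k (ν+1) ν] at key1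
  have key2 : ((k:ℝ) + 1) * CC (k+1) ν (ν+1) = CC k (ν+1) (ν+1) + CC k ν (ν+1+1) :=
    CC_rec k ν (ν+1)
  have e2 : (ν + 1 + 1 : ℝ) = ν + 2 := by ring
  rw [e2] at key2
  have half := CC_half hν1 k
  have hD := D_nonneg hν0 k 0 0 (by omega)
  have c0 : ((0:ℕ):ℝ) = 0 := by norm_num
  simp only [c0, add_zero] at hD
  have hP := CC_pos hν2 hν2 k
  have hk : (0:ℝ) < (k:ℝ) + 1 := by positivity
  have h2ν : (0:ℝ) ≤ 2*ν - 1 := by linarith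
  have expand : ((k:ℝ)+1) * (CC (k+1) ν ν - CC (k+1) ν (ν+1) - CC k (ν+1) (ν+1))
      = (2*ν-1) * CC k (ν+1) (ν+1) + (CC k (ν+1) (ν+1) - CC k ν (ν+2)) := by
    linear_combination key1 - key2 + half
  nlinarith [expand, hD, hP, h2ν, hk]

/-- Summability of the entire series `∑ α(μ,m) tᵐ`. -/
lemma summable_alt {μ : ℝ} (hμ : -1 < μ) {t : ℝ} (ht : 0 ≤ t) :
    Summable (fun m : ℕ => al μ m * t ^ m) := by
  apply summable_of_ratio_norm_eventually_le (r := 1/2) (by norm_num)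
  have h1 : ∀ᶠ m : ℕ in atTop, (2*t : ℝ) ≤ (m:ℝ) :=
    tendsto_natCast_atTop_atTop.eventually (eventually_ge_atTop (2*t))
  have h2 : ∀ᶠ m : ℕ in atTop, (-μ : ℝ) ≤ (m:ℝ) :=
    tendsto_natCast_atTop_atTop.eventually (eventually_ge_atTop (-μ))
  filter_upwards [h1, h2] with m hm1 hm2
  have hal := al_pos hμ m
  have hal1 := al_pos hμ (m+1)
  have hmμ : (0:ℝ) < (m:ℝ) + μ + 1 := by linarith
  have hrec : al μ (m+1) = al μ m / (((m:ℝ)+1) * ((m:ℝ)+μ+1)) := by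
    have hs := succ_mul_al μ m
    have he := al_eq_succ hμ m
    have hm1' : ((m:ℝ)+1) ≠ 0 := by positivity
    field_simp at hs he ⊢
    nlinarith [hs, he]
  rw [Real.norm_eq_abs, Real.norm_eq_abs,
    abs_of_nonneg (by positivity : (0:ℝ) ≤ al μ (m+1) * t^(m+1)),
    abs_of_nonneg (by positivity : (0:ℝ) ≤ al μ m * t^m), hrec]
  have hfrac : t / (((m:ℝ)+1) * ((m:ℝ)+μ+1)) ≤ 1/2 := by
    rw [div_le_iff₀ (by positivity)]
    nlinarith [hm1, hm2, ht]
  have hexp : al μ m / (((m:ℝ)+1) * ((m:ℝ)+μ+1)) * t ^ (m+1)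
      = (al μ m * t^m) * (t / (((m:ℝ)+1) * ((m:ℝ)+μ+1))) := by
    rw [pow_succ]; ring
  rw [hexp]
  calc (al μ m * t^m) * (t / (((m:ℝ)+1) * ((m:ℝ)+μ+1)))
      ≤ (al μ m * t^m) * (1/2) := by
        apply mul_le_mul_of_nonneg_left hfrac (by positivity)
    _ = 1/2 * (al μ m * t^m) := by ring

/-- `G μ t = ∑ α(μ,m) tᵐ`. -/
noncomputable def G (μ t : ℝ) : ℝ := ∑' m : ℕ, al μ m * t ^ m

lemma G_pos {μ : ℝ} (hμ : -1 < μ) {t : ℝ} (ht : 0 ≤ t) : 0 < G μ t := by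
  apply Summable.tsum_pos (summable_alt hμ ht)
    (fun m => mul_nonneg (al_pos hμ m).le (pow_nonneg ht m)) 0
  simpa using (al_pos hμ 0)

lemma inner_sum (μ σ t : ℝ) (n : ℕ) :
    ∑ k ∈ Finset.range (n+1), (al μ k * t^k) * (al σ (n-k) * t^(n-k)) = CC n μ σ * t^n := by
  unfold CC
  rw [Finset.sum_mul]
  apply Finset.sum_congr rfl
  intro k hk
  have hkn : k ≤ n := Nat.lt_succ_iff.mp (Finset.mem_range.mp hk)
  have hadd : k + (n - k) = n := Nat.add_sub_cancel' hkn
  calc (al μ k * t^k) * (al σ (n-k) * t^(n-k))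
      = (al μ k * al σ (n-k)) * (t^k * t^(n-k)) := by ring
    _ = (al μ k * al σ (n-k)) * t^n := by rw [← pow_add, hadd]
    _ = al μ k * al σ (n-k) * t^n := rfl

lemma summable_norm_alt {μ : ℝ} (hμ : -1 < μ) {t : ℝ} (ht : 0 ≤ t) :
    Summable (fun m : ℕ => ‖al μ m * t ^ m‖) :=
  (summable_alt hμ ht).congr fun m =>
    (Real.norm_of_nonneg (mul_nonneg (al_pos hμ m).le (pow_nonneg ht m))).symm

lemma G_mul {μ σ : ℝ} (hμ : -1 < μ) (hσ : -1 < σ) {t : ℝ} (ht : 0 ≤ t) :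
    G μ t * G σ t = ∑' k : ℕ, CC k μ σ * t^k := by
  unfold G
  rw [tsum_mul_tsum_eq_tsum_sum_range_of_summable_norm
    (summable_norm_alt hμ ht) (summable_norm_alt hσ ht)]
  exact tsum_congr fun n => inner_sum μ σ t n

lemma summable_CC {μ σ : ℝ} (hμ : -1 < μ) (hσ : -1 < σ) {t : ℝ} (ht : 0 ≤ t) :
    Summable (fun k : ℕ => CC k μ σ * t^k) := by
  have h := (summable_norm_sum_mul_range_of_summable_norm
    (summable_norm_alt hμ ht) (summable_norm_alt hσ ht)).of_norm
  exact h.congr fun n => inner_sum μ σ t n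

/-- Key positivity: `G_ν² - G_ν G_{ν+1} - t G_{ν+1}² > 0`. -/
lemma R_pos {ν : ℝ} (hν : 1/2 ≤ ν) {t : ℝ} (ht : 0 < t) :
    0 < G ν t * G ν t - G ν t * G (ν+1) t - t * (G (ν+1) t * G (ν+1) t) := by
  have hν1 : (-1:ℝ) < ν := by linarith
  have hν2 : (-1:ℝ) < ν + 1 := by linarith
  rw [G_mul hν1 hν1 ht.le, G_mul hν1 hν2 ht.le, G_mul hν2 hν2 ht.le]
  have hA := summable_CC hν1 hν1 ht.le
  have hB := summable_CC hν1 hν2 ht.le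
  have hP := summable_CC hν2 hν2 ht.le
  set f : ℕ → ℝ := fun k => CC k ν ν * t^k - CC k ν (ν+1) * t^k with hf_def
  have hf : Summable f := hA.sub hB
  have e1 : ∑' k, CC k ν ν * t^k - ∑' k, CC k ν (ν+1) * t^k = ∑' k, f k :=
    (Summable.tsum_sub hA hB).symm
  set g : ℕ → ℝ := fun k => CC k (ν+1) (ν+1) * t^(k+1) with hg_def
  have hg : Summable g := by
    have := hP.mul_left t
    exact this.congr fun k => by simp only [hg_def, pow_succ]; ring
  have e2 : t * ∑' k, CC k (ν+1) (ν+1) * t^k = ∑' k, g k := by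
    rw [← tsum_mul_left]
    exact tsum_congr fun k => by simp only [hg_def, pow_succ]; ring
  rw [e1, e2, Summable.tsum_eq_zero_add hf]
  have hfs : Summable (fun k => f (k+1)) := (summable_nat_add_iff 1).2 hf
  have e3 : (f 0 + ∑' k, f (k+1)) - ∑' k, g k = f 0 + ∑' k, (f (k+1) - g k) := by
    rw [Summable.tsum_sub hfs hg]; ring
  rw [e3]
  have hterm : ∀ k : ℕ, 0 ≤ f (k+1) - g k := by
    intro k
    have hr := r_nonneg hν k
    have : f (k+1) - g k
        = (CC (k+1) ν ν - CC (k+1) ν (ν+1) - CC k (ν+1) (ν+1)) * t^(k+1) := by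
      simp only [hf_def, hg_def]; ring
    rw [this]
    exact mul_nonneg hr (by positivity)
  have hsum_nonneg : 0 ≤ ∑' k, (f (k+1) - g k) := tsum_nonneg hterm
  have hf0 : 0 < f 0 := by
    simp only [hf_def]
    have hCC0 : ∀ σ : ℝ, CC 0 ν σ = al ν 0 * al σ 0 := by
      intro σ; unfold CC; simp
    rw [pow_zero]
    have h1 : al ν 0 = (ν+1) * al (ν+1) 0 := by
      have := al_eq_succ hν1 0
      simpa using this
    have h2 := al_pos hν2 0
    have h3 := al_pos hν1 0
    rw [hCC0, hCC0, mul_one, mul_one]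
    nlinarith [h1, h2, h3]
  linarith

lemma besselI_eq {μ : ℝ} {x : ℝ} (hx : 0 < x) :
    besselI μ x = (x/2)^μ * G μ (x^2/4) := by
  unfold besselI G
  rw [← tsum_mul_left]
  apply tsum_congr
  intro m
  have hx2 : (0:ℝ) < x/2 := by linarith
  have h1 : (x/2 : ℝ) ^ (2*(m:ℝ) + μ) = (x^2/4)^m * (x/2)^μ := by
    rw [Real.rpow_add hx2]
    congr 1
    have hc : (2*(m:ℝ)) = ((2*m : ℕ) : ℝ) := by push_cast; ring
    rw [hc, Real.rpow_natCast, pow_mul]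
    congr 1
    ring
  rw [h1, div_eq_mul_inv]
  unfold al
  rw [one_div]
  ring

end Stmt14Aux


open Stmt14Aux in
theorem stmt_14 (ν x : ℝ) (hν : 1 / 2 ≤ ν) (hx : 0 < x) :
    (psi ν x) ^ 2 + (2 / x) * psi ν x - 1 < 0 := by
  have hx2 : (0:ℝ) < x/2 := by linarith
  have ht : (0:ℝ) < x^2/4 := by positivity
  have hν1 : (-1:ℝ) < ν := by linarith
  have hν2 : (-1:ℝ) < ν + 1 := by linarith
  have hG0 := G_pos hν1 ht.le
  have hG1 := G_pos hν2 ht.le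
  have hb0 : besselI ν x = (x/2)^ν * G ν (x^2/4) := besselI_eq hx
  have hb1 : besselI (ν+1) x = (x/2)^(ν+1) * G (ν+1) (x^2/4) := besselI_eq hx
  have hp : (0:ℝ) < (x/2)^ν := Real.rpow_pos_of_pos hx2 ν
  have hadd : (x/2:ℝ)^(ν+1) = (x/2)^ν * (x/2) := by
    rw [Real.rpow_add hx2, Real.rpow_one]
  have hpsi : psi ν x = (x/2) * (G (ν+1) (x^2/4) / G ν (x^2/4)) := by
    rw [psi, hb0, hb1, hadd]
    field_simp
  have hR := R_pos hν ht
  have key : (psi ν x)^2 + (2/x) * psi ν x - 1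
      = -((G ν (x^2/4) * G ν (x^2/4) - G ν (x^2/4) * G (ν+1) (x^2/4)
          - (x^2/4) * (G (ν+1) (x^2/4) * G (ν+1) (x^2/4)))
         / (G ν (x^2/4) * G ν (x^2/4))) := by
    rw [hpsi]
    field_simp
    ring
  rw [key]
  have hpos : 0 < (G ν (x^2/4) * G ν (x^2/4) - G ν (x^2/4) * G (ν+1) (x^2/4)
      - (x^2/4) * (G (ν+1) (x^2/4) * G (ν+1) (x^2/4)))
      / (G ν (x^2/4) * G ν (x^2/4)) := div_pos hR (by positivity)
  linarith
end

section
/- Let ν ≥ 1/2, K > ν + 1, and let r > 0 satisfy r = Ψ_ν(2Kr), where Ψ_ν(x) = I_{ν+1}(x)/I_ν(x). Then r < √(1 − 1/K). -/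
open Real Filter Topology

namespace Stmt16Aux

noncomputable def bf (μ y : ℝ) : ℝ :=
  ∑' m : ℕ, y ^ m / ((m.factorial : ℝ) * Real.Gamma ((m : ℝ) + μ + 1))

lemma gamma_arg_pos {μ : ℝ} (hμ : 0 ≤ μ) (m : ℕ) : (0:ℝ) < (m : ℝ) + μ + 1 := by positivity

lemma gamma_pos {μ : ℝ} (hμ : 0 ≤ μ) (m : ℕ) : 0 < Real.Gamma ((m : ℝ) + μ + 1) :=
  Real.Gamma_pos_of_pos (gamma_arg_pos hμ m)

lemma gamma_succ {μ : ℝ} (hμ : 0 ≤ μ) (m : ℕ) :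
    Real.Gamma ((m : ℝ) + μ + 2) = ((m : ℝ) + μ + 1) * Real.Gamma ((m : ℝ) + μ + 1) := by
  rw [show (m : ℝ) + μ + 2 = ((m : ℝ) + μ + 1) + 1 by ring,
    Real.Gamma_add_one (ne_of_gt (gamma_arg_pos hμ m))]

lemma gamma_ge {μ : ℝ} (hμ : 0 ≤ μ) (m : ℕ) :
    Real.Gamma (μ + 1) ≤ Real.Gamma ((m : ℝ) + μ + 1) := by
  induction m with
  | zero => simp
  | succ n ih =>
    have h := gamma_succ hμ n
    have h1 : ((n+1 : ℕ) : ℝ) + μ + 1 = ((n:ℕ):ℝ) + μ + 2 := by push_cast; ring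
    rw [h1, h]
    nlinarith [gamma_pos hμ n, gamma_arg_pos hμ n]

lemma summable_aux (R : ℝ) : Summable (fun m : ℕ => (m : ℝ) * R ^ (m - 1) / m.factorial) := by
  rw [← summable_nat_add_iff 1]
  have : (fun m : ℕ => ((m+1 : ℕ) : ℝ) * R ^ ((m+1) - 1) / (m+1).factorial)
      = fun m : ℕ => R ^ m / m.factorial := by
    funext m
    have hm : ((m+1).factorial : ℝ) = (m+1) * m.factorial := by
      push_cast [Nat.factorial_succ]; ring
    have h1 : ((m:ℝ)+1) ≠ 0 := by positivity
    simp only [Nat.add_sub_cancel]; rw [hm]; push_cast; rw [mul_div_mul_left _ _ h1]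
  rw [this]
  exact Real.summable_pow_div_factorial R

lemma term_abs {μ : ℝ} (hμ : 0 ≤ μ) (c : ℝ) (m : ℕ) :
    ‖c / ((m.factorial : ℝ) * Real.Gamma ((m : ℝ) + μ + 1))‖
      ≤ (|c| / m.factorial) * (Real.Gamma (μ + 1))⁻¹ := by
  have hfac : (0:ℝ) < m.factorial := by positivity
  have hg := gamma_pos hμ m
  have hg1 : (0:ℝ) < Real.Gamma (μ + 1) := Real.Gamma_pos_of_pos (by linarith)
  rw [norm_div, Real.norm_eq_abs, Real.norm_eq_abs,
    abs_of_pos (by positivity : (0:ℝ) < (m.factorial : ℝ) * Real.Gamma ((m : ℝ) + μ + 1))]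
  rw [← div_eq_mul_inv, div_div]
  gcongr
  exact gamma_ge hμ m

lemma summable_bf {μ : ℝ} (hμ : 0 ≤ μ) (y : ℝ) :
    Summable (fun m : ℕ => y ^ m / ((m.factorial : ℝ) * Real.Gamma ((m : ℝ) + μ + 1))) := by
  apply Summable.of_norm_bounded
    (g := fun m : ℕ => (|y| ^ m / m.factorial) * (Real.Gamma (μ + 1))⁻¹)
    ((Real.summable_pow_div_factorial |y|).mul_right _)
  intro m
  simpa [abs_pow] using term_abs hμ (y ^ m) m


lemma summable_weighted {μ : ℝ} (hμ : 0 ≤ μ) (y : ℝ) :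
    Summable (fun m : ℕ =>
      (m : ℝ) * y ^ m / ((m.factorial : ℝ) * Real.Gamma ((m : ℝ) + μ + 2))) := by
  apply Summable.of_norm_bounded
    (g := fun m : ℕ => ((m:ℝ) * |y| ^ (m-1) / m.factorial) * (|y| * (Real.Gamma (μ+2))⁻¹))
    ((summable_aux |y|).mul_right _)
  intro m
  have h := term_abs (μ := μ+1) (by linarith) ((m:ℝ) * y ^ m) m
  rw [show ∀ k : ℕ, (k:ℝ) + (μ+1) + 1 = (k:ℝ) + μ + 2 from fun k => by ring] at h
  rw [show (μ:ℝ) + 1 + 1 = μ + 2 by ring] at h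
  refine h.trans ?_
  rw [abs_mul, abs_pow, Nat.abs_cast]
  cases m with
  | zero => simp
  | succ n =>
    have hp : |y| ^ (n+1) = |y| ^ n * |y| := pow_succ _ _
    rw [hp]
    apply le_of_eq
    simp only [Nat.add_sub_cancel]
    ring

lemma bf_nonneg {μ : ℝ} (hμ : 0 ≤ μ) {y : ℝ} (hy : 0 ≤ y) : 0 ≤ bf μ y :=
  tsum_nonneg fun m => by
    have := gamma_pos hμ m; positivity

lemma bf_pos {μ : ℝ} (hμ : 0 ≤ μ) {y : ℝ} (hy : 0 ≤ y) : 0 < bf μ y := by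
  refine Summable.tsum_pos (summable_bf hμ y) (fun m => by have := gamma_pos hμ m; positivity) 0 ?_
  have := gamma_pos hμ 0
  simp only [pow_zero, Nat.factorial_zero, Nat.cast_one, one_mul, Nat.cast_zero] at this ⊢
  positivity

lemma bf_zero {μ : ℝ} (hμ : 0 ≤ μ) : bf μ 0 = (Real.Gamma (μ+1))⁻¹ := by
  unfold bf
  rw [Summable.tsum_eq_zero_add (summable_bf hμ 0)]
  simp

lemma bf_succ_le {μ : ℝ} (hμ : 0 ≤ μ) {y : ℝ} (hy : 0 ≤ y) :
    (μ + 1) * bf (μ+1) y ≤ bf μ y := by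
  unfold bf
  rw [← tsum_mul_left]
  refine Summable.tsum_le_tsum ?_ ((summable_bf (by linarith : (0:ℝ) ≤ μ+1) y).mul_left _)
    (summable_bf hμ y)
  intro m
  have hG := gamma_pos hμ m
  have hfac : (0:ℝ) < m.factorial := by positivity
  rw [show (m:ℝ) + (μ+1) + 1 = (m:ℝ) + μ + 2 by ring, gamma_succ hμ m]
  have h1 : (μ+1) * (y ^ m / ((m.factorial:ℝ) * (((m:ℝ)+μ+1) * Real.Gamma ((m:ℝ)+μ+1))))
      ≤ ((m:ℝ)+μ+1) * (y ^ m / ((m.factorial:ℝ) * (((m:ℝ)+μ+1) * Real.Gamma ((m:ℝ)+μ+1)))) := by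
    apply mul_le_mul_of_nonneg_right
    · have : (0:ℝ) ≤ (m:ℝ) := Nat.cast_nonneg m
      linarith
    · positivity
  refine h1.trans (le_of_eq ?_)
  have h2 : ((m:ℝ)+μ+1) ≠ 0 := ne_of_gt (gamma_arg_pos hμ m)
  field_simp

lemma bf_rec {μ : ℝ} (hμ : 0 ≤ μ) (y : ℝ) :
    bf μ y = (μ + 1) * bf (μ+1) y + y * bf (μ+2) y := by
  have hμ1 : (0:ℝ) ≤ μ + 1 := by linarith
  have hμ2 : (0:ℝ) ≤ μ + 2 := by linarith
  have hf : Summable (fun m : ℕ =>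
      (μ+1) * (y ^ m / ((m.factorial:ℝ) * Real.Gamma ((m:ℝ) + μ + 2)))) := by
    have := (summable_bf hμ1 y).mul_left (μ+1)
    simpa [show ∀ k : ℕ, (k:ℝ) + (μ+1) + 1 = (k:ℝ) + μ + 2 from fun k => by ring] using this
  have hk : Summable (fun m : ℕ =>
      (m:ℝ) * y ^ m / ((m.factorial:ℝ) * Real.Gamma ((m:ℝ) + μ + 2))) :=
    summable_weighted hμ y
  have hterm : ∀ m : ℕ, y ^ m / ((m.factorial:ℝ) * Real.Gamma ((m:ℝ) + μ + 1))
      = (μ+1) * (y ^ m / ((m.factorial:ℝ) * Real.Gamma ((m:ℝ) + μ + 2)))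
        + (m:ℝ) * y ^ m / ((m.factorial:ℝ) * Real.Gamma ((m:ℝ) + μ + 2)) := by
    intro m
    rw [gamma_succ hμ m]
    have hG := gamma_pos hμ m
    have harg := gamma_arg_pos hμ m
    have hfac : (0:ℝ) < m.factorial := by positivity
    field_simp
    ring
  have step1 : bf μ y = ∑' m : ℕ,
      ((μ+1) * (y ^ m / ((m.factorial:ℝ) * Real.Gamma ((m:ℝ) + μ + 2)))
        + (m:ℝ) * y ^ m / ((m.factorial:ℝ) * Real.Gamma ((m:ℝ) + μ + 2))) := by
    unfold bf; exact tsum_congr hterm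
  rw [step1, Summable.tsum_add hf hk]
  congr 1
  · unfold bf
    rw [← tsum_mul_left]
    refine tsum_congr fun m => ?_
    rw [show (m:ℝ) + (μ+1) + 1 = (m:ℝ) + μ + 2 by ring]
  · -- ∑' k = y * bf (μ+2) y
    rw [Summable.tsum_eq_zero_add hk]
    simp only [Nat.cast_zero, zero_mul, zero_div, zero_add]
    unfold bf
    rw [← tsum_mul_left]
    refine tsum_congr fun m => ?_
    have hfac : ((m+1).factorial : ℝ) = ((m:ℝ)+1) * m.factorial := by
      push_cast [Nat.factorial_succ]; ring
    have h1 : ((m+1 : ℕ):ℝ) + μ + 2 = (m:ℝ) + (μ+2) + 1 := by push_cast; ring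
    rw [h1, hfac]
    have hG := gamma_pos hμ2 m
    have hfacpos : (0:ℝ) < m.factorial := by positivity
    have hm1 : (0:ℝ) < (m:ℝ) + 1 := by positivity
    push_cast
    field_simp
    ring

lemma summable_bf_deriv {μ : ℝ} (hμ : 0 ≤ μ) (y : ℝ) :
    Summable (fun m : ℕ =>
      (m:ℝ) * y ^ (m-1) / ((m.factorial : ℝ) * Real.Gamma ((m : ℝ) + μ + 1))) := by
  apply Summable.of_norm_bounded
    (g := fun m : ℕ => ((m:ℝ) * |y| ^ (m-1) / m.factorial) * (Real.Gamma (μ+1))⁻¹)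
    ((summable_aux |y|).mul_right _)
  intro m
  have h := term_abs hμ ((m:ℝ) * y ^ (m-1)) m
  refine h.trans (le_of_eq ?_)
  rw [abs_mul, abs_pow, Nat.abs_cast]

lemma bf_tsum_deriv {μ : ℝ} (hμ : 0 ≤ μ) (y : ℝ) :
    (∑' m : ℕ, (m:ℝ) * y ^ (m-1) / ((m.factorial : ℝ) * Real.Gamma ((m : ℝ) + μ + 1)))
      = bf (μ+1) y := by
  rw [Summable.tsum_eq_zero_add (summable_bf_deriv hμ y)]
  simp only [Nat.cast_zero, zero_mul, zero_div, zero_add]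
  unfold bf
  refine tsum_congr fun m => ?_
  have hfac : ((m+1).factorial : ℝ) = ((m:ℝ)+1) * m.factorial := by
    push_cast [Nat.factorial_succ]; ring
  have h1 : ((m+1 : ℕ):ℝ) + μ + 1 = (m:ℝ) + (μ+1) + 1 := by push_cast; ring
  have h2 : (m + 1) - 1 = m := by omega
  rw [h2, h1, hfac]
  have hG := gamma_pos (by linarith : (0:ℝ) ≤ μ+1) m
  rw [show (m:ℝ) + (μ+1) + 1 = (m:ℝ) + (μ+1) + 1 from rfl]
  have hfacpos : (0:ℝ) < m.factorial := by positivity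
  have hm1 : (0:ℝ) < (m:ℝ) + 1 := by positivity
  push_cast
  field_simp

lemma bf_hasDerivAt {μ : ℝ} (hμ : 0 ≤ μ) (y : ℝ) :
    HasDerivAt (bf μ) (bf (μ+1) y) y := by
  set R : ℝ := |y| + 1 with hR
  have hRpos : (0:ℝ) < R := by positivity
  have hmem : y ∈ Metric.ball (0:ℝ) R := by
    simp only [Metric.mem_ball, dist_zero_right, Real.norm_eq_abs]
    linarith
  have hmem0 : (0:ℝ) ∈ Metric.ball (0:ℝ) R := by
    simp only [Metric.mem_ball, dist_zero_right, norm_zero]; linarith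
  have H := hasDerivAt_tsum_of_isPreconnected
    (u := fun m : ℕ => ((m:ℝ) * R ^ (m-1) / m.factorial) * (Real.Gamma (μ+1))⁻¹)
    (t := Metric.ball (0:ℝ) R)
    (g := fun (m : ℕ) (z : ℝ) => z ^ m / ((m.factorial : ℝ) * Real.Gamma ((m : ℝ) + μ + 1)))
    (g' := fun (m : ℕ) (z : ℝ) =>
      (m:ℝ) * z ^ (m-1) / ((m.factorial : ℝ) * Real.Gamma ((m : ℝ) + μ + 1)))
    ((summable_aux R).mul_right _) Metric.isOpen_ball
    (convex_ball (0:ℝ) R).isPreconnected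
    (fun m z _ => (hasDerivAt_pow m z).div_const _)
    (fun m z hz => ?_) hmem0 (summable_bf hμ 0) hmem
  · have := (bf_tsum_deriv hμ y) ▸ H
    exact this
  · have h := term_abs hμ ((m:ℝ) * z ^ (m-1)) m
    refine h.trans ?_
    rw [abs_mul, abs_pow, Nat.abs_cast]
    have hzR : |z| ≤ R := by
      simp only [Metric.mem_ball, dist_zero_right, Real.norm_eq_abs] at hz
      linarith
    have hG1 : (0:ℝ) < Real.Gamma (μ+1) := Real.Gamma_pos_of_pos (by linarith)
    have hfacpos : (0:ℝ) < m.factorial := by positivity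
    have hb : (m:ℝ) * |z| ^ (m-1) ≤ (m:ℝ) * R ^ (m-1) :=
      mul_le_mul_of_nonneg_left (pow_le_pow_left₀ (abs_nonneg z) hzR _) (Nat.cast_nonneg m)
    exact mul_le_mul_of_nonneg_right ((div_le_div_iff_of_pos_right hfacpos).mpr hb)
      (inv_nonneg.mpr hG1.le)

/-- `bg c μ y = F_μ² - c F_μ F_{μ+1} - y F_{μ+1}²`. -/
noncomputable def bg (c μ y : ℝ) : ℝ :=
  bf μ y ^ 2 - c * bf μ y * bf (μ+1) y - y * bf (μ+1) y ^ 2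

lemma bg_hasDerivAt {μ : ℝ} (hμ : 0 ≤ μ) (c y : ℝ) :
    HasDerivAt (bg c μ)
      (c * bg (μ+1) (μ+1) y + (2*μ + 1 - 2*c) * bf (μ+1) y ^ 2) y := by
  have h1 := bf_hasDerivAt hμ y
  have h2 := bf_hasDerivAt (by linarith : (0:ℝ) ≤ μ+1) y
  have hD : HasDerivAt (bg c μ)
      (2 * bf μ y * bf (μ+1) y
        - c * (bf (μ+1) y * bf (μ+1) y + bf μ y * bf (μ+1+1) y)
        - (bf (μ+1) y ^ 2 + y * (2 * bf (μ+1) y * bf (μ+1+1) y))) y := by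
    have hsq : HasDerivAt (fun z => bf μ z ^ 2) (2 * bf μ y * bf (μ+1) y) y := by
      have := h1.fun_pow 2
      simpa [mul_comm, mul_assoc, mul_left_comm] using this
    have hmul : HasDerivAt (fun z => c * bf μ z * bf (μ+1) z)
        (c * (bf (μ+1) y * bf (μ+1) y + bf μ y * bf (μ+1+1) y)) y := by
      have := ((h1.const_mul c).fun_mul h2)
      refine this.congr_deriv ?_
      ring
    have hsq2 : HasDerivAt (fun z => z * bf (μ+1) z ^ 2)
        (bf (μ+1) y ^ 2 + y * (2 * bf (μ+1) y * bf (μ+1+1) y)) y := by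
      have hp : HasDerivAt (fun z => bf (μ+1) z ^ 2) (2 * bf (μ+1) y * bf (μ+1+1) y) y := by
        have := h2.fun_pow 2
        simpa [mul_comm, mul_assoc, mul_left_comm] using this
      have := (hasDerivAt_id y).fun_mul hp
      refine this.congr_deriv ?_
      simp only [id_eq]
      ring
    exact (hsq.sub hmul).sub hsq2
  convert hD using 1
  have hrec := bf_rec hμ y
  unfold bg
  rw [show (μ:ℝ)+1+1 = μ+2 by ring] at *
  linear_combination (c * bf (μ+2) y - 2 * bf (μ+1) y) * hrec

lemma bg_zero_pos {μ c : ℝ} (hμ : 0 ≤ μ) (hc : c < μ + 1) : 0 < bg c μ 0 := by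
  have hG1 : (0:ℝ) < Real.Gamma (μ+1) := Real.Gamma_pos_of_pos (by linarith)
  have hg2 : Real.Gamma (μ+2) = (μ+1) * Real.Gamma (μ+1) := by
    rw [show (μ:ℝ)+2 = (μ+1)+1 by ring, Real.Gamma_add_one (by positivity)]
  have h1 : bf μ 0 = (Real.Gamma (μ+1))⁻¹ := bf_zero hμ
  have h2 : bf (μ+1) 0 = (Real.Gamma (μ+2))⁻¹ := by
    rw [bf_zero (by linarith : (0:ℝ) ≤ μ+1), show (μ:ℝ)+1+1 = μ+2 by ring]
  unfold bg
  rw [h1, h2, hg2]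
  have hμ1 : (0:ℝ) < μ + 1 := by linarith
  have key : (Real.Gamma (μ+1))⁻¹ ^ 2 - c * (Real.Gamma (μ+1))⁻¹ * ((μ+1) * Real.Gamma (μ+1))⁻¹
      - 0 * ((μ+1) * Real.Gamma (μ+1))⁻¹ ^ 2
      = (μ + 1 - c) / ((μ+1) * Real.Gamma (μ+1) ^ 2) := by
    field_simp
    ring
  rw [key]
  exact div_pos (by linarith) (by positivity)

lemma bg_pos_step {μ c y₀ : ℝ} (hμ : 0 ≤ μ) (hc0 : 0 < c) (hcμ : 2*c ≤ 2*μ + 1)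
    (hc1 : c < μ + 1) (hy₀ : 0 ≤ y₀)
    (h : ∀ y ∈ Set.Icc (0:ℝ) y₀, 0 < bg (μ+1) (μ+1) y) :
    ∀ y ∈ Set.Icc (0:ℝ) y₀, 0 < bg c μ y := by
  have hdiff : ∀ z : ℝ, HasDerivAt (bg c μ)
      (c * bg (μ+1) (μ+1) z + (2*μ + 1 - 2*c) * bf (μ+1) z ^ 2) z :=
    fun z => bg_hasDerivAt hμ c z
  have hcont : Continuous (bg c μ) := by
    have : Differentiable ℝ (bg c μ) := fun z => (hdiff z).differentiableAt
    exact this.continuous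
  have hmono : StrictMonoOn (bg c μ) (Set.Icc 0 y₀) := by
    apply strictMonoOn_of_deriv_pos (convex_Icc 0 y₀) hcont.continuousOn
    intro z hz
    rw [interior_Icc] at hz
    rw [(hdiff z).deriv]
    have hz' : z ∈ Set.Icc (0:ℝ) y₀ := Set.mem_Icc.mpr ⟨hz.1.le, hz.2.le⟩
    have h1 := h z hz'
    nlinarith [sq_nonneg (bf (μ+1) z)]
  intro y hy
  rcases eq_or_lt_of_le hy.1 with h0 | h0
  · rw [← h0]; exact bg_zero_pos hμ hc1
  · have h2 : bg c μ 0 < bg c μ y :=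
      hmono (Set.mem_Icc.mpr ⟨le_refl 0, hy₀⟩) hy h0
    have h3 := bg_zero_pos hμ hc1 (c := c)
    linarith

lemma bg_key {y₀ : ℝ} (hy₀ : 0 ≤ y₀) : ∀ (N : ℕ) (μ : ℝ), 1/2 ≤ μ → y₀ ≤ μ + N →
    ∀ y ∈ Set.Icc (0:ℝ) y₀, 0 < bg μ μ y := by
  intro N
  induction N with
  | zero =>
    intro μ hμ hle y hy
    have hμ0 : (0:ℝ) ≤ μ := by linarith
    have hμ1 : (0:ℝ) ≤ μ + 1 := by linarith
    simp only [Nat.cast_zero, add_zero] at hle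
    have hy0 : 0 ≤ y := hy.1
    have hyμ : y ≤ μ := le_trans hy.2 hle
    have hF : 0 < bf μ y := bf_pos hμ0 hy0
    have hF1 : 0 < bf (μ+1) y := bf_pos hμ1 hy0
    have hle1 : (μ+1) * bf (μ+1) y ≤ bf μ y := bf_succ_le hμ0 hy0
    unfold bg
    nlinarith [mul_le_mul_of_nonneg_left hle1 hF.le,
      mul_le_mul_of_nonneg_left hle1 hF1.le,
      mul_pos hF hF1, sq_nonneg (bf (μ+1) y), mul_pos hF1 hF1]
  | succ n ih =>
    intro μ hμ hle y hy
    have hμ0 : (0:ℝ) ≤ μ := by linarith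
    have hnext : ∀ z ∈ Set.Icc (0:ℝ) y₀, 0 < bg (μ+1) (μ+1) z := by
      apply ih (μ+1) (by linarith)
      push_cast at hle ⊢
      linarith
    exact bg_pos_step hμ0 (by linarith) (by linarith) (by linarith) hy₀ hnext y hy

lemma bg_main_pos {ν y₀ : ℝ} (hν : 1/2 ≤ ν) (hy₀ : 0 < y₀) : 0 < bg (ν + 1/2) ν y₀ := by
  have hν0 : (0:ℝ) ≤ ν := by linarith
  have hIcc : ∀ y ∈ Set.Icc (0:ℝ) y₀, 0 < bg (ν+1) (ν+1) y := by
    apply bg_key hy₀.le (Nat.ceil y₀) (ν+1) (by linarith)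
    have := Nat.le_ceil y₀
    have h2 : (0:ℝ) ≤ (Nat.ceil y₀ : ℝ) := Nat.cast_nonneg _
    linarith
  exact bg_pos_step hν0 (by linarith) (by linarith) (by linarith) hy₀.le hIcc y₀
    (Set.mem_Icc.mpr ⟨hy₀.le, le_refl y₀⟩)

lemma besselI_eq_bf {ν : ℝ} (hν : 0 ≤ ν) {x : ℝ} (hx : 0 < x) :
    besselI ν x = (x/2) ^ ν * bf ν (x^2/4) := by
  unfold besselI bf
  rw [← tsum_mul_left]
  refine tsum_congr fun m => ?_
  have hx2 : (0:ℝ) < x/2 := by linarith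
  rw [← mul_div_assoc]
  congr 1
  rw [show 2 * (m:ℝ) + ν = ((2*m : ℕ) : ℝ) + ν by push_cast; ring,
    Real.rpow_add hx2, Real.rpow_natCast, pow_mul]
  rw [show (x/2)^2 = x^2/4 by ring]
  ring

end Stmt16Aux

open Stmt16Aux

theorem stmt_16 (ν K r : ℝ) (hν : 1 / 2 ≤ ν) (hK : ν + 1 < K) (hr : 0 < r)
    (heq : r = psi ν (2 * K * r)) :
    r < Real.sqrt (1 - 1 / K) := by
  have hν0 : (0:ℝ) ≤ ν := by linarith
  have hK0 : (0:ℝ) < K := by linarith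
  set x : ℝ := 2 * K * r with hxdef
  have hx : 0 < x := by positivity
  set y : ℝ := x^2/4 with hydef
  have hy : 0 < y := by positivity
  have hB : 0 < bf ν y := bf_pos hν0 hy.le
  have hA : 0 < bf (ν+1) y := bf_pos (by linarith) hy.le
  have hx2 : (0:ℝ) < x/2 := by linarith
  have hpow : (0:ℝ) < (x/2) ^ ν := Real.rpow_pos_of_pos hx2 ν
  -- rewrite the fixed point equation
  have hpsi : psi ν x = (x/2) * bf (ν+1) y / bf ν y := by
    unfold psi
    rw [besselI_eq_bf hν0 hx, besselI_eq_bf (by linarith : (0:ℝ) ≤ ν+1) hx]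
    rw [show (ν:ℝ)+1 = ν + 1 from rfl, Real.rpow_add hx2, Real.rpow_one]
    rw [← hydef]
    field_simp
  rw [hpsi] at heq
  have hxh : x / 2 = K * r := by rw [hxdef]; ring
  -- derive bf ν y = K * bf (ν+1) y
  have hKA : bf ν y = K * bf (ν+1) y := by
    have h2 : r * bf ν y = (x/2) * bf (ν+1) y := by
      rw [heq]; field_simp
    have h3 : r * bf ν y = r * (K * bf (ν+1) y) := by rw [h2, hxh]; ring
    exact mul_left_cancel₀ (ne_of_gt hr) h3
  -- main inequality
  have hbg := bg_main_pos hν hy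
  unfold bg at hbg
  rw [hKA] at hbg
  -- hbg : 0 < (K*A)^2 - (ν+1/2)*(K*A)*A - y*A^2  where A = bf (ν+1) y
  have hr2 : r^2 = y / K^2 := by
    rw [hydef, hxdef]; field_simp; ring
  have hy_lt : y < K^2 - (ν + 1/2) * K := by
    nlinarith [sq_nonneg (bf (ν+1) y), mul_pos hA hA]
  have hfinal : r^2 < 1 - 1/K := by
    rw [hr2]
    rw [div_lt_iff₀ (by positivity : (0:ℝ) < K^2)]
    have hν12 : (1:ℝ) ≤ ν + 1/2 := by linarith
    have hKK : (1 - 1/K) * K^2 = K^2 - K := by field_simp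
    rw [hKK]
    nlinarith [mul_le_mul_of_nonneg_right hν12 hK0.le]
  rw [show √(1 - 1/K) = Real.sqrt (1 - 1/K) from rfl]
  exact Real.lt_sqrt_of_sq_lt hfinal
end

section
/- For every ν ≥ 0, the function λ_ν(x) = log(1 − (2/x)·Ψ_ν(x)) / log Ψ_ν(x), where Ψ_ν(x) = I_{ν+1}(x)/I_ν(x), satisfies lim_{x→∞} λ_ν(x) = 4/(2ν+1). -/
open Real Filter Topology Finset

noncomputable def rP (a : ℝ) (n : ℕ) : ℝ := ∏ i ∈ Finset.range n, (a + i)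

lemma rP_zero (a : ℝ) : rP a 0 = 1 := by simp [rP]

lemma rP_succ (a : ℝ) (n : ℕ) : rP a (n+1) = rP a n * (a + n) := by
  simp [rP, Finset.prod_range_succ]

lemma rP_succ' (a : ℝ) (n : ℕ) : rP a (n+1) = a * rP (a+1) n := by
  rw [rP, Finset.prod_range_succ']
  simp only [Nat.cast_zero, add_zero, rP]
  rw [mul_comm]
  congr 1
  apply Finset.prod_congr rfl
  intro i _
  push_cast
  ring

lemma rP_shift (a : ℝ) (n : ℕ) : a * rP (a+1) n = rP a n * (a + n) := by
  rw [← rP_succ', rP_succ]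

lemma rP_pos {a : ℝ} (ha : 0 < a) (n : ℕ) : 0 < rP a n := by
  apply Finset.prod_pos; intro i _; positivity

lemma rP_one_le {a : ℝ} (ha : 1 ≤ a) (n : ℕ) : 1 ≤ rP a n := by
  induction n with
  | zero => simp [rP_zero]
  | succ n ih =>
    rw [rP_succ]
    have : (0:ℝ) ≤ n := Nat.cast_nonneg n
    nlinarith

lemma Gamma_rP {a : ℝ} (ha : 0 < a) (n : ℕ) : Real.Gamma (a + n) = rP a n * Real.Gamma a := by
  induction n with
  | zero => simp [rP_zero]
  | succ n ih =>
    have h : a + ((n+1 : ℕ) : ℝ) = (a + n) + 1 := by push_cast; ring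
    rw [h, Real.Gamma_add_one (by positivity), ih, rP_succ]
    ring

lemma rP_congr {a b : ℝ} (h : a = b) (n : ℕ) : rP a n = rP b n := by rw [h]

lemma Vkey (k : ℕ) : ∀ μ ρ : ℝ,
    ∑ m ∈ Finset.range (k+1), (k.choose m : ℝ) * rP (μ+1+m) (k-m) * rP (ρ+1+(k-m : ℕ)) m
      = rP (μ+ρ+k+1) k := by
  induction k with
  | zero => intro μ ρ; simp [rP_zero]
  | succ k ih =>
    intro μ ρ
    set g : ℕ → ℝ := fun m => rP (μ+1+m) (k+1-m) * rP (ρ+1+(k+1-m : ℕ)) m with hg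
    have hS : ∑ m ∈ Finset.range (k+2), ((k+1).choose m : ℝ) * rP (μ+1+m) (k+1-m)
        * rP (ρ+1+(k+1-m : ℕ)) m
        = ∑ m ∈ Finset.range (k+1), (k.choose m : ℝ) * (g m + g (m+1)) := by
      have e1 : ∑ m ∈ Finset.range (k+2), ((k+1).choose m : ℝ) * rP (μ+1+m) (k+1-m)
          * rP (ρ+1+(k+1-m : ℕ)) m = ∑ m ∈ Finset.range (k+2), ((k+1).choose m : ℝ) * g m := by
        apply Finset.sum_congr rfl; intro m _; rw [hg]; ring
      rw [e1, Finset.sum_range_succ' (fun m => ((k+1).choose m : ℝ) * g m)]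
      have e2 : ∀ i, ((k+1).choose (i+1) : ℝ) * g (i+1)
          = (k.choose i : ℝ) * g (i+1) + (k.choose (i+1) : ℝ) * g (i+1) := by
        intro i; rw [Nat.choose_succ_succ]; push_cast; ring
      rw [Finset.sum_congr rfl (fun i _ => e2 i), Finset.sum_add_distrib]
      have e3 : ∑ i ∈ Finset.range (k+1), ((k.choose (i+1) : ℝ) * g (i+1))
          + ((k+1).choose 0 : ℝ) * g 0 = ∑ m ∈ Finset.range (k+1), (k.choose m : ℝ) * g m := by
        have := Finset.sum_range_succ' (fun m => ((k.choose m : ℝ)) * g m) (k+1)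
        rw [Finset.sum_range_succ (fun m => ((k.choose m : ℝ)) * g m) (k+1)] at this
        simp only [Nat.choose_succ_self, Nat.cast_zero, zero_mul, add_zero] at this
        rw [show (((k+1).choose 0 : ℕ) : ℝ) = ((k.choose 0 : ℕ) : ℝ) by simp]
        exact this.symm
      rw [add_assoc, e3, ← Finset.sum_add_distrib]
      apply Finset.sum_congr rfl; intro m _; ring
    rw [hS]
    have hbr : ∀ m ∈ Finset.range (k+1), (k.choose m : ℝ) * (g m + g (m+1))
        = (μ+ρ+k+2) * ((k.choose m : ℝ) * rP ((μ+1)+1+m) (k-m) * rP ((ρ+1)+1+(k-m : ℕ)) m) := by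
      intro m hm
      have hmk : m ≤ k := by simpa [Nat.lt_succ_iff] using hm
      have h1 : k+1-m = (k-m)+1 := by omega
      have h2 : k+1-(m+1) = k-m := by omega
      rw [hg]
      simp only [h1, h2, Nat.cast_add, Nat.cast_one]
      have r1 : rP (μ+1+(m:ℝ)) ((k-m)+1) = (μ+1+(m:ℝ)) * rP (μ+1+1+(m:ℝ)) (k-m) := by
        rw [rP_succ', rP_congr (show μ+1+(m:ℝ)+1 = μ+1+1+(m:ℝ) by ring)]
      have r2 : rP (ρ+1+(((k-m:ℕ):ℝ)+1)) m = rP (ρ+1+1+((k-m:ℕ):ℝ)) m :=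
        rP_congr (by ring) m
      have r3 : rP (μ+1+((m:ℝ)+1)) (k-m) = rP (μ+1+1+(m:ℝ)) (k-m) :=
        rP_congr (by ring) _
      have r4 : rP (ρ+1+((k-m:ℕ):ℝ)) (m+1) = (ρ+1+((k-m:ℕ):ℝ)) * rP (ρ+1+1+((k-m:ℕ):ℝ)) m := by
        rw [rP_succ', rP_congr (show ρ+1+((k-m:ℕ):ℝ)+1 = ρ+1+1+((k-m:ℕ):ℝ) by ring)]
      rw [r1, r2, r3, r4]
      have hsub : ((k-m:ℕ):ℝ) = (k:ℝ) - (m:ℝ) := by push_cast [Nat.cast_sub hmk]; ring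
      rw [hsub]
      ring
    rw [Finset.sum_congr rfl hbr, ← Finset.mul_sum]
    have := ih (μ+1) (ρ+1)
    have harg : ∀ m : ℕ, ((μ+1)+1+(m:ℝ)) = (μ+1)+1+m := fun _ => rfl
    rw [this]
    have : μ+ρ+((k+1 : ℕ) : ℝ)+1 = (μ+ρ+k+2) := by push_cast; ring
    rw [this, rP_succ' (μ+ρ+k+2) k]
    congr 1
    ring

noncomputable def bTerm (ν x : ℝ) (m : ℕ) : ℝ :=
  (x / 2) ^ (2 * (m : ℝ) + ν) / ((m.factorial : ℝ) * Real.Gamma ((m : ℝ) + ν + 1))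

lemma besselI_def (ν x : ℝ) : (∑' m : ℕ, (x / 2) ^ (2 * (m : ℝ) + ν) /
    ((m.factorial : ℝ) * Real.Gamma ((m : ℝ) + ν + 1))) = ∑' m, bTerm ν x m := rfl

lemma Gamma_fact (hν : 0 ≤ ν) (m : ℕ) :
    Real.Gamma ((m : ℝ) + ν + 1) = rP (ν+1) m * Real.Gamma (ν+1) := by
  rw [show (m : ℝ) + ν + 1 = (ν+1) + m by ring, Gamma_rP (by linarith) m]

lemma bTerm_nonneg {ν x : ℝ} (hx : 0 < x) (hν : 0 ≤ ν) (m : ℕ) : 0 ≤ bTerm ν x m := by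
  unfold bTerm
  have h1 : (0:ℝ) < x/2 := by linarith
  have h2 : (0:ℝ) < Real.Gamma ((m : ℝ) + ν + 1) := Real.Gamma_pos_of_pos (by positivity)
  positivity

lemma rpow_split {x ν : ℝ} (hx : 0 < x) (m : ℕ) :
    (x/2) ^ (2*(m:ℝ)+ν) = ((x/2)^2)^m * (x/2)^ν := by
  have h1 : (0:ℝ) < x/2 := by linarith
  rw [Real.rpow_add h1, show (2*(m:ℝ)) = ((2*m : ℕ) : ℝ) by push_cast; ring,
    Real.rpow_natCast, pow_mul]

lemma fact_le_rP {ν : ℝ} (hν : 0 ≤ ν) (m : ℕ) : (m.factorial : ℝ) ≤ rP (ν+1) m := by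
  rw [show ((m.factorial : ℕ) : ℝ) = ∏ i ∈ Finset.range m, ((i : ℝ) + 1) by
    rw [← Finset.prod_range_add_one_eq_factorial m]; push_cast; rfl]
  apply Finset.prod_le_prod
  · intro i _; positivity
  · intro i _; linarith

lemma summable_bTerm {ν x : ℝ} (hx : 0 < x) (hν : 0 ≤ ν) : Summable (bTerm ν x) := by
  have h1 : (0:ℝ) < x/2 := by linarith
  have hG : (0:ℝ) < Real.Gamma (ν+1) := Real.Gamma_pos_of_pos (by linarith)
  have hs : Summable (fun m : ℕ => ((x/2)^ν / Real.Gamma (ν+1)) * (((x/2)^2)^m / m.factorial)) :=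
    (Real.summable_pow_div_factorial ((x/2)^2)).mul_left _
  refine Summable.of_nonneg_of_le (bTerm_nonneg hx hν) (fun m => ?_) hs
  rw [bTerm, Gamma_fact hν m, rpow_split hx m]
  have hrp : (1:ℝ) ≤ rP (ν+1) m := rP_one_le (by linarith) m
  have hf : (0:ℝ) < (m.factorial : ℝ) := by exact_mod_cast Nat.factorial_pos m
  have step1 : ((x/2)^2)^m * (x/2)^ν / ((m.factorial : ℝ) * (rP (ν+1) m * Real.Gamma (ν+1)))
      ≤ ((x/2)^2)^m * (x/2)^ν / ((m.factorial : ℝ) * Real.Gamma (ν+1)) := by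
    apply div_le_div_of_nonneg_left (by positivity) (by positivity)
    nlinarith [mul_le_mul_of_nonneg_left hrp (le_of_lt (mul_pos hf hG))]
  refine step1.trans (le_of_eq ?_)
  field_simp

lemma besselI_pos {ν x : ℝ} (hx : 0 < x) (hν : 0 ≤ ν) : 0 < besselI ν x := by
  rw [besselI, besselI_def]
  apply Summable.tsum_pos (summable_bTerm hx hν) (bTerm_nonneg hx hν) 0
  unfold bTerm
  have h2 : (0:ℝ) < Real.Gamma ((0 : ℕ) + ν + 1) := Real.Gamma_pos_of_pos (by push_cast; linarith)
  have h1 : (0:ℝ) < x/2 := by linarith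
  positivity

noncomputable def WW (μ ρ : ℝ) (k : ℕ) : ℝ :=
  rP (μ+ρ+k+1) k /
    ((k.factorial : ℝ) * (rP (μ+1) k * rP (ρ+1) k) * (Real.Gamma (μ+1) * Real.Gamma (ρ+1)))

lemma term_eq {μ ρ x : ℝ} (hx : 0 < x) (hμ : 0 ≤ μ) (hρ : 0 ≤ ρ) {m k : ℕ} (hmk : m ≤ k) :
    bTerm μ x m * bTerm ρ x (k-m)
      = (x/2) ^ (2*(k:ℝ)+μ+ρ) *
        ((k.choose m : ℝ) * rP (μ+1+m) (k-m) * rP (ρ+1+((k-m : ℕ) : ℝ)) m)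
        / ((k.factorial : ℝ) * (Real.Gamma (μ+(k:ℝ)+1) * Real.Gamma (ρ+(k:ℝ)+1))) := by
  have h1 : (0:ℝ) < x/2 := by linarith
  have hsub : ((k-m : ℕ) : ℝ) = (k:ℝ) - m := by
    push_cast [Nat.cast_sub hmk]; ring
  have fA : rP (μ+1+(m:ℝ)) (k-m) * Real.Gamma ((m:ℝ)+μ+1) = Real.Gamma (μ+(k:ℝ)+1) := by
    have := Gamma_rP (a := μ+1+(m:ℝ)) (by positivity) (k-m)
    rw [hsub] at this
    rw [show ((m:ℝ)+μ+1) = μ+1+(m:ℝ) by ring]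
    rw [show (μ+(k:ℝ)+1) = μ+1+(m:ℝ) + ((k:ℝ) - m) by ring, this]
  have fB : rP (ρ+1+((k-m : ℕ) : ℝ)) m * Real.Gamma (((k-m:ℕ):ℝ)+ρ+1) = Real.Gamma (ρ+(k:ℝ)+1) := by
    have := Gamma_rP (a := ρ+1+(((k-m:ℕ)):ℝ)) (by positivity) m
    rw [show (((k-m:ℕ):ℝ)+ρ+1) = ρ+1+((k-m:ℕ):ℝ) by ring]
    rw [show (ρ+(k:ℝ)+1) = ρ+1+((k-m:ℕ):ℝ) + (m:ℝ) by rw [hsub]; ring, this]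
  have fC : ((k.choose m : ℕ) : ℝ) * m.factorial * (k-m).factorial = (k.factorial : ℝ) := by
    exact_mod_cast congrArg (Nat.cast (R := ℝ)) (Nat.choose_mul_factorial_mul_factorial hmk)
  have hy : (x/2) ^ (2*(m:ℝ)+μ) * (x/2) ^ (2*((k-m:ℕ):ℝ)+ρ) = (x/2) ^ (2*(k:ℝ)+μ+ρ) := by
    rw [← Real.rpow_add h1]
    congr 1
    rw [hsub]; ring
  have g1 : (0:ℝ) < Real.Gamma ((m:ℝ)+μ+1) := Real.Gamma_pos_of_pos (by positivity)
  have g2 : (0:ℝ) < Real.Gamma (((k-m:ℕ):ℝ)+ρ+1) := Real.Gamma_pos_of_pos (by positivity)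
  have gA : (0:ℝ) < Real.Gamma (μ+(k:ℝ)+1) := Real.Gamma_pos_of_pos (by positivity)
  have gB : (0:ℝ) < Real.Gamma (ρ+(k:ℝ)+1) := Real.Gamma_pos_of_pos (by positivity)
  have g5 : (0 : ℝ) < m.factorial := by exact_mod_cast Nat.factorial_pos m
  have g6 : (0 : ℝ) < (k-m).factorial := by exact_mod_cast Nat.factorial_pos (k-m)
  have g7 : (0 : ℝ) < (k.factorial : ℝ) := by exact_mod_cast Nat.factorial_pos k
  have hD1 : ((m.factorial : ℝ) * Real.Gamma ((m:ℝ)+μ+1))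
      * ((((k-m:ℕ).factorial : ℝ)) * Real.Gamma (((k-m:ℕ):ℝ)+ρ+1)) ≠ 0 := by positivity
  have hD2 : ((k.factorial : ℝ) * (Real.Gamma (μ+(k:ℝ)+1) * Real.Gamma (ρ+(k:ℝ)+1))) ≠ 0 := by
    positivity
  rw [bTerm, bTerm, div_mul_div_comm, hy, div_eq_div_iff hD1 hD2, ← fA, ← fB, ← fC]
  ring

lemma sum_anti {μ ρ x : ℝ} (hx : 0 < x) (hμ : 0 ≤ μ) (hρ : 0 ≤ ρ) (k : ℕ) :
    ∑ p ∈ Finset.HasAntidiagonal.antidiagonal k, bTerm μ x p.1 * bTerm ρ x p.2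
      = (x/2) ^ (2*(k:ℝ)+μ+ρ) * WW μ ρ k := by
  rw [Finset.Nat.sum_antidiagonal_eq_sum_range_succ (fun m n => bTerm μ x m * bTerm ρ x n) k]
  have : ∀ m ∈ Finset.range (k+1), bTerm μ x m * bTerm ρ x (k-m)
      = (x/2) ^ (2*(k:ℝ)+μ+ρ) *
        ((k.choose m : ℝ) * rP (μ+1+m) (k-m) * rP (ρ+1+((k-m : ℕ) : ℝ)) m)
        / ((k.factorial : ℝ) * (Real.Gamma (μ+(k:ℝ)+1) * Real.Gamma (ρ+(k:ℝ)+1))) := by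
    intro m hm
    exact term_eq hx hμ hρ (by simpa [Nat.lt_succ_iff] using hm)
  rw [Finset.sum_congr rfl this]
  have e : ∀ m ∈ Finset.range (k+1), (x/2) ^ (2*(k:ℝ)+μ+ρ) *
        ((k.choose m : ℝ) * rP (μ+1+m) (k-m) * rP (ρ+1+((k-m : ℕ) : ℝ)) m)
        / ((k.factorial : ℝ) * (Real.Gamma (μ+(k:ℝ)+1) * Real.Gamma (ρ+(k:ℝ)+1)))
      = ((x/2) ^ (2*(k:ℝ)+μ+ρ) / ((k.factorial : ℝ) * (Real.Gamma (μ+(k:ℝ)+1) * Real.Gamma (ρ+(k:ℝ)+1))))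
        * ((k.choose m : ℝ) * rP (μ+1+m) (k-m) * rP (ρ+1+((k-m : ℕ) : ℝ)) m) := by
    intro m _; ring
  rw [Finset.sum_congr rfl e, ← Finset.mul_sum, Vkey k μ ρ]
  rw [WW]
  have gk1 : Real.Gamma (μ+(k:ℝ)+1) = rP (μ+1) k * Real.Gamma (μ+1) := by
    rw [show μ+(k:ℝ)+1 = (μ+1)+(k:ℝ) by ring, Gamma_rP (by positivity) k]
  have gk2 : Real.Gamma (ρ+(k:ℝ)+1) = rP (ρ+1) k * Real.Gamma (ρ+1) := by
    rw [show ρ+(k:ℝ)+1 = (ρ+1)+(k:ℝ) by ring, Gamma_rP (by positivity) k]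
  rw [gk1, gk2]
  ring

lemma summable_norm_bTerm {ν x : ℝ} (hx : 0 < x) (hν : 0 ≤ ν) :
    Summable (fun m => ‖bTerm ν x m‖) := by
  refine (summable_bTerm hx hν).congr fun m => ?_
  rw [Real.norm_eq_abs, abs_of_nonneg (bTerm_nonneg hx hν m)]

lemma besselI_mul {μ ρ x : ℝ} (hx : 0 < x) (hμ : 0 ≤ μ) (hρ : 0 ≤ ρ) :
    besselI μ x * besselI ρ x = ∑' k : ℕ, (x/2) ^ (2*(k:ℝ)+μ+ρ) * WW μ ρ k := by
  rw [besselI, besselI, besselI_def, besselI_def,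
    tsum_mul_tsum_eq_tsum_sum_antidiagonal_of_summable_norm
      (summable_norm_bTerm hx hμ) (summable_norm_bTerm hx hρ)]
  exact tsum_congr (sum_anti hx hμ hρ)

lemma summable_WW {μ ρ x : ℝ} (hx : 0 < x) (hμ : 0 ≤ μ) (hρ : 0 ≤ ρ) :
    Summable (fun k : ℕ => (x/2) ^ (2*(k:ℝ)+μ+ρ) * WW μ ρ k) := by
  have := (summable_norm_sum_mul_antidiagonal_of_summable_norm
    (summable_norm_bTerm hx hμ) (summable_norm_bTerm hx hρ)).of_norm
  exact this.congr (sum_anti hx hμ hρ)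

lemma WW_pos {μ ρ : ℝ} (hμ : 0 ≤ μ) (hρ : 0 ≤ ρ) (k : ℕ) : 0 < WW μ ρ k := by
  rw [WW]
  have h1 : (0:ℝ) < rP (μ+ρ+k+1) k := rP_pos (by positivity) k
  have h2 : (0:ℝ) < rP (μ+1) k := rP_pos (by positivity) k
  have h3 : (0:ℝ) < rP (ρ+1) k := rP_pos (by positivity) k
  have h4 : (0:ℝ) < Real.Gamma (μ+1) := Real.Gamma_pos_of_pos (by positivity)
  have h5 : (0:ℝ) < Real.Gamma (ρ+1) := Real.Gamma_pos_of_pos (by positivity)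
  have h6 : (0:ℝ) < (k.factorial : ℝ) := by exact_mod_cast Nat.factorial_pos k
  positivity

lemma relB {ν : ℝ} (hν : 0 ≤ ν) (k : ℕ) :
    WW ν (ν+1) k * ((2*ν+(k:ℝ)+1)*(ν+(k:ℝ)+1)) = WW ν ν k * (2*ν+2*(k:ℝ)+1) := by
  have hk : (0:ℝ) ≤ k := Nat.cast_nonneg k
  have hP : (0:ℝ) < rP (ν+1) k := rP_pos (by linarith) k
  have hT : (0:ℝ) < rP (2*ν+(k:ℝ)+1) k := rP_pos (by linarith) k
  have hG : (0:ℝ) < Real.Gamma (ν+1) := Real.Gamma_pos_of_pos (by linarith)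
  have hF : (0:ℝ) < (k.factorial : ℝ) := by exact_mod_cast Nat.factorial_pos k
  have u3 : rP (ν+1+1) k = rP (ν+1) k * (ν+1+(k:ℝ)) / (ν+1) := by
    rw [eq_div_iff (by linarith : (ν+1:ℝ) ≠ 0)]
    have := rP_shift (ν+1) k
    linarith [this]
  have u2 : rP (2*ν+(k:ℝ)+2) k = rP (2*ν+(k:ℝ)+1) k * (2*ν+2*(k:ℝ)+1) / (2*ν+(k:ℝ)+1) := by
    rw [eq_div_iff (by linarith : (2*ν+(k:ℝ)+1:ℝ) ≠ 0)]
    have h := rP_shift (2*ν+(k:ℝ)+1) k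
    rw [rP_congr (show 2*ν+(k:ℝ)+1+1 = 2*ν+(k:ℝ)+2 by ring) k] at h
    linarith [h]
  have u4 : Real.Gamma (ν+1+1) = (ν+1)*Real.Gamma (ν+1) := by
    rw [Real.Gamma_add_one (by linarith : (ν+1:ℝ) ≠ 0)]
  rw [WW, WW, rP_congr (show ν+(ν+1)+(k:ℝ)+1 = 2*ν+(k:ℝ)+2 by ring) k,
    rP_congr (show ν+ν+(k:ℝ)+1 = 2*ν+(k:ℝ)+1 by ring) k, u2, u3, u4]
  field_simp
  ring

lemma relC {ν : ℝ} (hν : 0 ≤ ν) (j : ℕ) :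
    WW (ν+1) (ν+1) j * (2*ν+(j:ℝ)+2) = WW ν ν (j+1) * ((j:ℝ)+1) := by
  have hj : (0:ℝ) ≤ j := Nat.cast_nonneg j
  have hG : (0:ℝ) < Real.Gamma (ν+1) := Real.Gamma_pos_of_pos (by linarith)
  have hF : (0:ℝ) < (j.factorial : ℝ) := by exact_mod_cast Nat.factorial_pos j
  have hQ : (0:ℝ) < rP (ν+1+1) j := rP_pos (by linarith) j
  have hT : (0:ℝ) < rP (2*ν+(j:ℝ)+3) j := rP_pos (by linarith) j
  have v1 : rP (2*ν+(j:ℝ)+2) (j+1) = (2*ν+(j:ℝ)+2) * rP (2*ν+(j:ℝ)+3) j := by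
    rw [rP_succ', rP_congr (show 2*ν+(j:ℝ)+2+1 = 2*ν+(j:ℝ)+3 by ring) j]
  have v2 : rP (ν+1) (j+1) = (ν+1) * rP (ν+1+1) j := rP_succ' (ν+1) j
  have v4 : Real.Gamma (ν+1+1) = (ν+1)*Real.Gamma (ν+1) := by
    rw [Real.Gamma_add_one (by linarith : (ν+1:ℝ) ≠ 0)]
  have v5 : ((j+1).factorial : ℝ) = ((j:ℝ)+1) * (j.factorial : ℝ) := by
    rw [Nat.factorial_succ]; push_cast; ring
  rw [WW, WW, rP_congr (show (ν+1)+(ν+1)+(j:ℝ)+1 = 2*ν+(j:ℝ)+3 by ring) j,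
    rP_congr (show ν+ν+((j+1:ℕ):ℝ)+1 = 2*ν+(j:ℝ)+2 by push_cast; ring) (j+1), v1, v2, v4, v5]
  field_simp

lemma relC2 {ν : ℝ} (hν : 0 ≤ ν) (k : ℕ) :
    WW (ν+1) (ν+1) k * ((2*ν+(k:ℝ)+1)*(2*ν+(k:ℝ)+2)*(ν+(k:ℝ)+1)^2)
      = WW ν ν k * ((2*ν+2*(k:ℝ)+1)*(2*ν+2*(k:ℝ)+2)) := by
  have hk : (0:ℝ) ≤ k := Nat.cast_nonneg k
  have hP : (0:ℝ) < rP (ν+1) k := rP_pos (by linarith) k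
  have hT : (0:ℝ) < rP (2*ν+(k:ℝ)+1) k := rP_pos (by linarith) k
  have hG : (0:ℝ) < Real.Gamma (ν+1) := Real.Gamma_pos_of_pos (by linarith)
  have hF : (0:ℝ) < (k.factorial : ℝ) := by exact_mod_cast Nat.factorial_pos k
  have u3 : rP (ν+1+1) k = rP (ν+1) k * (ν+1+(k:ℝ)) / (ν+1) := by
    rw [eq_div_iff (by linarith : (ν+1:ℝ) ≠ 0)]
    linarith [rP_shift (ν+1) k]
  have u2 : rP (2*ν+(k:ℝ)+2) k = rP (2*ν+(k:ℝ)+1) k * (2*ν+2*(k:ℝ)+1) / (2*ν+(k:ℝ)+1) := by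
    rw [eq_div_iff (by linarith : (2*ν+(k:ℝ)+1:ℝ) ≠ 0)]
    have h := rP_shift (2*ν+(k:ℝ)+1) k
    rw [rP_congr (show 2*ν+(k:ℝ)+1+1 = 2*ν+(k:ℝ)+2 by ring) k] at h
    linarith [h]
  have u2b : rP (2*ν+(k:ℝ)+3) k
      = rP (2*ν+(k:ℝ)+1) k * ((2*ν+2*(k:ℝ)+1)*(2*ν+2*(k:ℝ)+2)) / ((2*ν+(k:ℝ)+1)*(2*ν+(k:ℝ)+2)) := by
    rw [eq_div_iff (by positivity : ((2*ν+(k:ℝ)+1)*(2*ν+(k:ℝ)+2):ℝ) ≠ 0)]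
    have h := rP_shift (2*ν+(k:ℝ)+2) k
    rw [rP_congr (show 2*ν+(k:ℝ)+2+1 = 2*ν+(k:ℝ)+3 by ring) k, u2] at h
    field_simp at h
    linarith [h]
  have u4 : Real.Gamma (ν+1+1) = (ν+1)*Real.Gamma (ν+1) := by
    rw [Real.Gamma_add_one (by linarith : (ν+1:ℝ) ≠ 0)]
  rw [WW, WW, rP_congr (show (ν+1)+(ν+1)+(k:ℝ)+1 = 2*ν+(k:ℝ)+3 by ring) k,
    rP_congr (show ν+ν+(k:ℝ)+1 = 2*ν+(k:ℝ)+1 by ring) k, u2b, u3, u4]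
  field_simp
  ring

lemma Ukey {ν : ℝ} (hν : 0 ≤ ν) (j : ℕ) :
    (2*ν+1) * WW ν (ν+1) (j+1) + 2 * WW (ν+1) (ν+1) j ≤ 2 * WW ν ν (j+1) := by
  have hj : (0:ℝ) ≤ j := Nat.cast_nonneg j
  have hβ : 0 < WW ν ν (j+1) := WW_pos hν hν (j+1)
  have h1 : (0:ℝ) < 2*ν+(j:ℝ)+2 := by linarith
  have h2 : (0:ℝ) < ν+(j:ℝ)+2 := by linarith
  have eB := relB hν (j+1)
  push_cast at eB
  have eC := relC hν j
  rw [← mul_le_mul_iff_of_pos_right (show (0:ℝ) < (2*ν+(j:ℝ)+2)*(ν+(j:ℝ)+2) by positivity)]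
  have eB2 : WW ν (ν+1) (j+1) * ((2*ν+(j:ℝ)+2)*(ν+(j:ℝ)+2)) = WW ν ν (j+1) * (2*ν+2*(j:ℝ)+3) := by
    linear_combination eB
  have eC2 : WW (ν+1) (ν+1) j * ((2*ν+(j:ℝ)+2)*(ν+(j:ℝ)+2))
      = WW ν ν (j+1) * ((j:ℝ)+1) * (ν+(j:ℝ)+2) := by
    linear_combination (ν+(j:ℝ)+2) * eC
  calc ((2*ν+1) * WW ν (ν+1) (j+1) + 2 * WW (ν+1) (ν+1) j) * ((2*ν+(j:ℝ)+2)*(ν+(j:ℝ)+2))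
      = (2*ν+1) * (WW ν (ν+1) (j+1) * ((2*ν+(j:ℝ)+2)*(ν+(j:ℝ)+2)))
        + 2 * (WW (ν+1) (ν+1) j * ((2*ν+(j:ℝ)+2)*(ν+(j:ℝ)+2))) := by ring
    _ = (2*ν+1) * (WW ν ν (j+1) * (2*ν+2*(j:ℝ)+3)) + 2 * (WW ν ν (j+1) * ((j:ℝ)+1) * (ν+(j:ℝ)+2)) := by
        rw [eB2, eC2]
    _ ≤ 2 * WW ν ν (j+1) * ((2*ν+(j:ℝ)+2)*(ν+(j:ℝ)+2)) := by
        nlinarith [mul_nonneg (mul_nonneg hβ.le h1.le) (show (0:ℝ) ≤ 2*ν+1 by linarith)]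

lemma Lkey {ν : ℝ} (hν : 0 ≤ ν) (j : ℕ) :
    4 * WW ν ν (j+1) ≤ 2*(2*ν+1) * WW ν (ν+1) (j+1) + (2*ν+2) * WW (ν+1) (ν+1) (j+1)
      + 4 * WW (ν+1) (ν+1) j := by
  have hj : (0:ℝ) ≤ j := Nat.cast_nonneg j
  have hβ : 0 < WW ν ν (j+1) := WW_pos hν hν (j+1)
  have h1 : (0:ℝ) < 2*ν+(j:ℝ)+2 := by linarith
  have h2 : (0:ℝ) < ν+(j:ℝ)+2 := by linarith
  have h3 : (0:ℝ) < 2*ν+(j:ℝ)+3 := by linarith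
  have eB := relB hν (j+1); push_cast at eB
  have eC := relC hν j
  have eC2 := relC2 hν (j+1); push_cast at eC2
  rw [← mul_le_mul_iff_of_pos_right (show (0:ℝ) < (2*ν+(j:ℝ)+2)*(2*ν+(j:ℝ)+3)*(ν+(j:ℝ)+2)^2 by positivity)]
  have eB2 : WW ν (ν+1) (j+1) * ((2*ν+(j:ℝ)+2)*(2*ν+(j:ℝ)+3)*(ν+(j:ℝ)+2)^2)
      = WW ν ν (j+1) * (2*ν+2*(j:ℝ)+3) * ((2*ν+(j:ℝ)+3)*(ν+(j:ℝ)+2)) := by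
    linear_combination ((2*ν+(j:ℝ)+3)*(ν+(j:ℝ)+2)) * eB
  have eC2' : WW (ν+1) (ν+1) j * ((2*ν+(j:ℝ)+2)*(2*ν+(j:ℝ)+3)*(ν+(j:ℝ)+2)^2)
      = WW ν ν (j+1) * ((j:ℝ)+1) * ((2*ν+(j:ℝ)+3)*(ν+(j:ℝ)+2)^2) := by
    linear_combination ((2*ν+(j:ℝ)+3)*(ν+(j:ℝ)+2)^2) * eC
  have eD2 : WW (ν+1) (ν+1) (j+1) * ((2*ν+(j:ℝ)+2)*(2*ν+(j:ℝ)+3)*(ν+(j:ℝ)+2)^2)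
      = WW ν ν (j+1) * ((2*ν+2*(j:ℝ)+3)*(2*ν+2*(j:ℝ)+4)) := by
    linear_combination eC2
  calc 4 * WW ν ν (j+1) * ((2*ν+(j:ℝ)+2)*(2*ν+(j:ℝ)+3)*(ν+(j:ℝ)+2)^2)
      ≤ WW ν ν (j+1) * (2*(2*ν+1)*((2*ν+2*(j:ℝ)+3)*((2*ν+(j:ℝ)+3)*(ν+(j:ℝ)+2)))
          + (2*ν+2)*((2*ν+2*(j:ℝ)+3)*(2*ν+2*(j:ℝ)+4))
          + 4*(((j:ℝ)+1)*((2*ν+(j:ℝ)+3)*(ν+(j:ℝ)+2)^2))) := by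
        nlinarith [hβ.le, hν, hj, mul_nonneg hν hj, mul_nonneg (mul_nonneg hν hj) hj,
          mul_nonneg (mul_nonneg hν hν) hj, mul_nonneg hν hν, mul_nonneg hj hj,
          mul_nonneg (mul_nonneg hν hν) hν, mul_nonneg (mul_nonneg hj hj) hj,
          mul_nonneg (mul_nonneg (mul_nonneg hν hν) hν) hj,
          mul_nonneg (mul_nonneg (mul_nonneg hν hν) hj) hj,
          mul_nonneg (mul_nonneg (mul_nonneg hν hj) hj) hj,
          mul_nonneg (mul_nonneg (mul_nonneg hν hν) hν) hν,
          mul_nonneg (mul_nonneg (mul_nonneg hj hj) hj) hj,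
          mul_nonneg hβ.le (mul_nonneg hν hj), mul_nonneg hβ.le (mul_nonneg hj hj),
          mul_nonneg hβ.le (mul_nonneg hν hν), mul_nonneg hβ.le hν, mul_nonneg hβ.le hj,
          mul_nonneg hβ.le (mul_nonneg (mul_nonneg hν hj) hj),
          mul_nonneg hβ.le (mul_nonneg (mul_nonneg hν hν) hj),
          mul_nonneg hβ.le (mul_nonneg (mul_nonneg hν hν) hν),
          mul_nonneg hβ.le (mul_nonneg (mul_nonneg hj hj) hj)]
    _ = (2*(2*ν+1) * WW ν (ν+1) (j+1) + (2*ν+2) * WW (ν+1) (ν+1) (j+1)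
          + 4 * WW (ν+1) (ν+1) j) * ((2*ν+(j:ℝ)+2)*(2*ν+(j:ℝ)+3)*(ν+(j:ℝ)+2)^2) := by
        have expand : (2*(2*ν+1) * WW ν (ν+1) (j+1) + (2*ν+2) * WW (ν+1) (ν+1) (j+1)
            + 4 * WW (ν+1) (ν+1) j) * ((2*ν+(j:ℝ)+2)*(2*ν+(j:ℝ)+3)*(ν+(j:ℝ)+2)^2)
          = 2*(2*ν+1) * (WW ν (ν+1) (j+1) * ((2*ν+(j:ℝ)+2)*(2*ν+(j:ℝ)+3)*(ν+(j:ℝ)+2)^2))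
            + (2*ν+2) * (WW (ν+1) (ν+1) (j+1) * ((2*ν+(j:ℝ)+2)*(2*ν+(j:ℝ)+3)*(ν+(j:ℝ)+2)^2))
            + 4 * (WW (ν+1) (ν+1) j * ((2*ν+(j:ℝ)+2)*(2*ν+(j:ℝ)+3)*(ν+(j:ℝ)+2)^2)) := by ring
        rw [expand, eB2, eC2', eD2]
        ring

lemma Gamma2_eq {ν : ℝ} (hν : 0 ≤ ν) : Real.Gamma (ν+1+1) = (ν+1)*Real.Gamma (ν+1) :=
  Real.Gamma_add_one (by linarith)

lemma WW_zero (μ ρ : ℝ) : WW μ ρ 0 = 1 / (Real.Gamma (μ+1) * Real.Gamma (ρ+1)) := by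
  simp [WW, rP_zero]

lemma Ukey0 {ν : ℝ} (hν : 0 ≤ ν) : (2*ν+1) * WW ν (ν+1) 0 ≤ 2 * WW ν ν 0 := by
  rw [WW_zero, WW_zero, Gamma2_eq hν]
  have hG : (0:ℝ) < Real.Gamma (ν+1) := Real.Gamma_pos_of_pos (by linarith)
  rw [mul_one_div, mul_one_div, div_le_div_iff₀ (by positivity) (by positivity)]
  nlinarith [mul_pos hG hG, sq_nonneg (Real.Gamma (ν+1))]

lemma Lkey0 {ν : ℝ} (hν : 0 ≤ ν) :
    4 * WW ν ν 0 ≤ 2*(2*ν+1) * WW ν (ν+1) 0 + (2*ν+2) * WW (ν+1) (ν+1) 0 := by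
  rw [WW_zero, WW_zero, WW_zero, Gamma2_eq hν]
  have hG : (0:ℝ) < Real.Gamma (ν+1) := Real.Gamma_pos_of_pos (by linarith)
  apply le_of_eq
  field_simp
  ring

section
variable {ν x : ℝ}

lemma ineqU (hx : 0 < x) (hν : 0 ≤ ν) :
    (2*ν+1) * (besselI ν x * besselI (ν+1) x) + x * (besselI (ν+1) x * besselI (ν+1) x)
      ≤ x * (besselI ν x * besselI ν x) := by
  have hy : (0:ℝ) < x/2 := by linarith
  have hν1 : (0:ℝ) ≤ ν+1 := by linarith
  set SA := fun k : ℕ => (x/2)^(2*(k:ℝ)+ν+ν) * WW ν ν k with hSA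
  set SB := fun k : ℕ => (x/2)^(2*(k:ℝ)+ν+(ν+1)) * WW ν (ν+1) k with hSB
  set SC := fun k : ℕ => (x/2)^(2*(k:ℝ)+(ν+1)+(ν+1)) * WW (ν+1) (ν+1) k with hSC
  have sA : Summable SA := summable_WW hx hν hν
  have sB : Summable SB := summable_WW hx hν hν1
  have sC : Summable SC := summable_WW hx hν1 hν1
  have hxpow : ∀ k : ℕ, x * (x/2)^(2*(k:ℝ)+ν+ν) = 2 * (x/2)^(2*(k:ℝ)+ν+(ν+1)) := by
    intro k
    rw [show (2*(k:ℝ)+ν+(ν+1)) = (2*(k:ℝ)+ν+ν) + 1 by ring, Real.rpow_add_one hy.ne']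
    ring
  have hxpow2 : ∀ j : ℕ, x * (x/2)^(2*(j:ℝ)+(ν+1)+(ν+1))
      = 2 * (x/2)^(2*(((j+1):ℕ):ℝ)+ν+(ν+1)) := by
    intro j
    rw [show (2*(((j+1):ℕ):ℝ)+ν+(ν+1)) = (2*(j:ℝ)+(ν+1)+(ν+1)) + 1 by push_cast; ring,
      Real.rpow_add_one hy.ne']
    ring
  set f : ℕ → ℝ := fun k => Nat.casesOn k 0 (fun j => x * SC j) with hfdef
  have hf1 : Summable (fun k => f (k+1)) := by
    have : (fun k => f (k+1)) = fun j => x * SC j := rfl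
    rw [this]
    exact sC.mul_left x
  have sf : Summable f := (summable_nat_add_iff 1).mp hf1
  have htf : ∑' k, f k = x * (besselI (ν+1) x * besselI (ν+1) x) := by
    rw [Summable.tsum_eq_zero_add sf]
    have h0 : f 0 = 0 := rfl
    have h1 : (fun k : ℕ => f (k+1)) = fun j => x * SC j := rfl
    rw [h0, h1, besselI_mul hx hν1 hν1, ← tsum_mul_left, zero_add]
  have hterm : ∀ k, (2*ν+1) * SB k + f k ≤ x * SA k := by
    intro k
    cases k with
    | zero =>
      have h0 : f 0 = 0 := rfl
      rw [h0, add_zero, hSB, hSA]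
      simp only []
      have e1 : x * ((x/2)^(2*((0:ℕ):ℝ)+ν+ν) * WW ν ν 0)
          = (x/2)^(2*((0:ℕ):ℝ)+ν+(ν+1)) * (2 * WW ν ν 0) := by
        rw [← mul_assoc, hxpow 0]; ring
      have e2 : (2*ν+1) * ((x/2)^(2*((0:ℕ):ℝ)+ν+(ν+1)) * WW ν (ν+1) 0)
          = (x/2)^(2*((0:ℕ):ℝ)+ν+(ν+1)) * ((2*ν+1) * WW ν (ν+1) 0) := by ring
      rw [e1, e2]
      exact mul_le_mul_of_nonneg_left (Ukey0 hν) (by positivity)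
    | succ j =>
      have h1 : f (j+1) = x * SC j := rfl
      rw [h1, hSB, hSA, hSC]
      simp only []
      have E : (0:ℝ) < (x/2)^(2*(((j+1):ℕ):ℝ)+ν+(ν+1)) := by positivity
      have e1 : x * ((x/2)^(2*(((j+1):ℕ):ℝ)+ν+ν) * WW ν ν (j+1))
          = (x/2)^(2*(((j+1):ℕ):ℝ)+ν+(ν+1)) * (2 * WW ν ν (j+1)) := by
        rw [← mul_assoc, hxpow (j+1)]; ring
      have e2 : (2*ν+1) * ((x/2)^(2*(((j+1):ℕ):ℝ)+ν+(ν+1)) * WW ν (ν+1) (j+1))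
            + x * ((x/2)^(2*((j:ℕ):ℝ)+(ν+1)+(ν+1)) * WW (ν+1) (ν+1) j)
          = (x/2)^(2*(((j+1):ℕ):ℝ)+ν+(ν+1))
            * ((2*ν+1) * WW ν (ν+1) (j+1) + 2 * WW (ν+1) (ν+1) j) := by
        rw [← mul_assoc x _ _, hxpow2 j]; ring
      rw [e1, e2]
      exact mul_le_mul_of_nonneg_left (Ukey hν j) E.le
  have main := Summable.tsum_le_tsum hterm ((sB.mul_left (2*ν+1)).add sf) (sA.mul_left x)
  rw [Summable.tsum_add (sB.mul_left (2*ν+1)) sf, tsum_mul_left, tsum_mul_left, htf] at main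
  rw [besselI_mul hx hν hν1, besselI_mul hx hν hν]
  simpa only [hSA, hSB, hSC] using main

lemma ineqL (hx : 0 < x) (hν : 0 ≤ ν) :
    x^2 * (besselI ν x * besselI ν x)
      ≤ (2*ν+1) * x * (besselI ν x * besselI (ν+1) x)
        + (2*ν+2) * (besselI (ν+1) x * besselI (ν+1) x)
        + x^2 * (besselI (ν+1) x * besselI (ν+1) x) := by
  have hy : (0:ℝ) < x/2 := by linarith
  have hν1 : (0:ℝ) ≤ ν+1 := by linarith
  set SA := fun k : ℕ => (x/2)^(2*(k:ℝ)+ν+ν) * WW ν ν k with hSA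
  set SB := fun k : ℕ => (x/2)^(2*(k:ℝ)+ν+(ν+1)) * WW ν (ν+1) k with hSB
  set SC := fun k : ℕ => (x/2)^(2*(k:ℝ)+(ν+1)+(ν+1)) * WW (ν+1) (ν+1) k with hSC
  have sA : Summable SA := summable_WW hx hν hν
  have sB : Summable SB := summable_WW hx hν hν1
  have sC : Summable SC := summable_WW hx hν1 hν1
  have hxpow : ∀ k : ℕ, x^2 * (x/2)^(2*(k:ℝ)+ν+ν) = 4 * (x/2)^(2*(k:ℝ)+(ν+1)+(ν+1)) := by
    intro k
    rw [show (2*(k:ℝ)+(ν+1)+(ν+1)) = (2*(k:ℝ)+ν+ν) + 1 + 1 by ring,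
      Real.rpow_add_one hy.ne', Real.rpow_add_one hy.ne']
    ring
  have hxpowB : ∀ k : ℕ, x * (x/2)^(2*(k:ℝ)+ν+(ν+1)) = 2 * (x/2)^(2*(k:ℝ)+(ν+1)+(ν+1)) := by
    intro k
    rw [show (2*(k:ℝ)+(ν+1)+(ν+1)) = (2*(k:ℝ)+ν+(ν+1)) + 1 by ring, Real.rpow_add_one hy.ne']
    ring
  have hxpow2 : ∀ j : ℕ, x^2 * (x/2)^(2*(j:ℝ)+(ν+1)+(ν+1))
      = 4 * (x/2)^(2*(((j+1):ℕ):ℝ)+(ν+1)+(ν+1)) := by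
    intro j
    rw [show (2*(((j+1):ℕ):ℝ)+(ν+1)+(ν+1)) = (2*(j:ℝ)+(ν+1)+(ν+1)) + 1 + 1 by push_cast; ring,
      Real.rpow_add_one hy.ne', Real.rpow_add_one hy.ne']
    ring
  set f : ℕ → ℝ := fun k => Nat.casesOn k 0 (fun j => x^2 * SC j) with hfdef
  have hf1 : Summable (fun k => f (k+1)) := by
    have : (fun k => f (k+1)) = fun j => x^2 * SC j := rfl
    rw [this]
    exact sC.mul_left (x^2)
  have sf : Summable f := (summable_nat_add_iff 1).mp hf1
  have htf : ∑' k, f k = x^2 * (besselI (ν+1) x * besselI (ν+1) x) := by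
    rw [Summable.tsum_eq_zero_add sf]
    have h0 : f 0 = 0 := rfl
    have h1 : (fun k : ℕ => f (k+1)) = fun j => x^2 * SC j := rfl
    rw [h0, h1, besselI_mul hx hν1 hν1, ← tsum_mul_left, zero_add]
  have hterm : ∀ k, x^2 * SA k ≤ (2*ν+1)*x * SB k + (2*ν+2) * SC k + f k := by
    intro k
    cases k with
    | zero =>
      have h0 : f 0 = 0 := rfl
      rw [h0, add_zero, hSB, hSA, hSC]
      simp only []
      have e1 : x^2 * ((x/2)^(2*((0:ℕ):ℝ)+ν+ν) * WW ν ν 0)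
          = (x/2)^(2*((0:ℕ):ℝ)+(ν+1)+(ν+1)) * (4 * WW ν ν 0) := by
        rw [← mul_assoc, hxpow 0]; ring
      have e2 : (2*ν+1)*x * ((x/2)^(2*((0:ℕ):ℝ)+ν+(ν+1)) * WW ν (ν+1) 0)
            + (2*ν+2) * ((x/2)^(2*((0:ℕ):ℝ)+(ν+1)+(ν+1)) * WW (ν+1) (ν+1) 0)
          = (x/2)^(2*((0:ℕ):ℝ)+(ν+1)+(ν+1))
            * (2*(2*ν+1) * WW ν (ν+1) 0 + (2*ν+2) * WW (ν+1) (ν+1) 0) := by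
        rw [show (2*ν+1)*x * ((x/2)^(2*((0:ℕ):ℝ)+ν+(ν+1)) * WW ν (ν+1) 0)
          = (2*ν+1) * ((x * (x/2)^(2*((0:ℕ):ℝ)+ν+(ν+1))) * WW ν (ν+1) 0) by ring, hxpowB 0]
        ring
      rw [e1, e2]
      exact mul_le_mul_of_nonneg_left (Lkey0 hν) (by positivity)
    | succ j =>
      have h1 : f (j+1) = x^2 * SC j := rfl
      rw [h1, hSB, hSA, hSC]
      simp only []
      have E : (0:ℝ) < (x/2)^(2*(((j+1):ℕ):ℝ)+(ν+1)+(ν+1)) := by positivity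
      have e1 : x^2 * ((x/2)^(2*(((j+1):ℕ):ℝ)+ν+ν) * WW ν ν (j+1))
          = (x/2)^(2*(((j+1):ℕ):ℝ)+(ν+1)+(ν+1)) * (4 * WW ν ν (j+1)) := by
        rw [← mul_assoc, hxpow (j+1)]; ring
      have e2 : (2*ν+1)*x * ((x/2)^(2*(((j+1):ℕ):ℝ)+ν+(ν+1)) * WW ν (ν+1) (j+1))
            + (2*ν+2) * ((x/2)^(2*(((j+1):ℕ):ℝ)+(ν+1)+(ν+1)) * WW (ν+1) (ν+1) (j+1))
            + x^2 * ((x/2)^(2*((j:ℕ):ℝ)+(ν+1)+(ν+1)) * WW (ν+1) (ν+1) j)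
          = (x/2)^(2*(((j+1):ℕ):ℝ)+(ν+1)+(ν+1))
            * (2*(2*ν+1) * WW ν (ν+1) (j+1) + (2*ν+2) * WW (ν+1) (ν+1) (j+1)
              + 4 * WW (ν+1) (ν+1) j) := by
        rw [show (2*ν+1)*x * ((x/2)^(2*(((j+1):ℕ):ℝ)+ν+(ν+1)) * WW ν (ν+1) (j+1))
          = (2*ν+1) * ((x * (x/2)^(2*(((j+1):ℕ):ℝ)+ν+(ν+1))) * WW ν (ν+1) (j+1)) by ring,
          hxpowB (j+1),
          show x^2 * ((x/2)^(2*((j:ℕ):ℝ)+(ν+1)+(ν+1)) * WW (ν+1) (ν+1) j)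
          = (x^2 * (x/2)^(2*((j:ℕ):ℝ)+(ν+1)+(ν+1))) * WW (ν+1) (ν+1) j by ring,
          hxpow2 j]
        ring
      rw [e1, e2]
      exact mul_le_mul_of_nonneg_left (Lkey hν j) E.le
  have main := Summable.tsum_le_tsum hterm (sA.mul_left (x^2))
    (((sB.mul_left ((2*ν+1)*x)).add (sC.mul_left (2*ν+2))).add sf)
  rw [Summable.tsum_add ((sB.mul_left ((2*ν+1)*x)).add (sC.mul_left (2*ν+2))) sf,
    Summable.tsum_add (sB.mul_left ((2*ν+1)*x)) (sC.mul_left (2*ν+2)),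
    tsum_mul_left, tsum_mul_left, tsum_mul_left, htf] at main
  rw [besselI_mul hx hν hν1, besselI_mul hx hν hν]
  nth_rewrite 1 [besselI_mul hx hν1 hν1]
  simpa only [hSA, hSB, hSC] using main

end

section
variable {ν x : ℝ}

lemma psi_pos (hx : 0 < x) (hν : 0 ≤ ν) : 0 < psi ν x :=
  div_pos (besselI_pos hx (by linarith)) (besselI_pos hx hν)

lemma psi_lt_one (hx : 0 < x) (hν : 0 ≤ ν) : psi ν x < 1 := by
  have hP := besselI_pos hx hν
  have hQ := besselI_pos hx (show (0:ℝ) ≤ ν+1 by linarith)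
  have hU := ineqU hx hν
  rw [psi, div_lt_one hP]
  nlinarith [mul_pos (show (0:ℝ) < 2*ν+1 by linarith) (mul_pos hP hQ),
    mul_nonneg hx.le (add_nonneg hP.le hQ.le)]

lemma psi_ineq_U (hx : 0 < x) (hν : 0 ≤ ν) :
    (2*ν+1) * psi ν x ≤ x * (1 - (psi ν x)^2) := by
  have hP := besselI_pos hx hν
  have hQ := besselI_pos hx (show (0:ℝ) ≤ ν+1 by linarith)
  have hU := ineqU hx hν
  have hP2 : (0:ℝ) < (besselI ν x)^2 := by positivity
  have h1 : (2*ν+1) * psi ν x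
      = ((2*ν+1) * (besselI ν x * besselI (ν+1) x)) / (besselI ν x)^2 := by
    rw [psi]; field_simp
  have h2 : x * (1 - (psi ν x)^2)
      = (x * (besselI ν x * besselI ν x) - x * (besselI (ν+1) x * besselI (ν+1) x))
        / (besselI ν x)^2 := by
    rw [psi]; field_simp
  rw [h1, h2, div_le_div_iff₀ hP2 hP2]
  nlinarith [hU, hP2]

lemma psi_ineq_L (hx : 0 < x) (hν : 0 ≤ ν) :
    x^2 * (1 - (psi ν x)^2) ≤ (2*ν+1) * x * psi ν x + (2*ν+2) * (psi ν x)^2 := by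
  have hP := besselI_pos hx hν
  have hQ := besselI_pos hx (show (0:ℝ) ≤ ν+1 by linarith)
  have hL := ineqL hx hν
  have hP2 : (0:ℝ) < (besselI ν x)^2 := by positivity
  have h1 : x^2 * (1 - (psi ν x)^2)
      = (x^2 * (besselI ν x * besselI ν x) - x^2 * (besselI (ν+1) x * besselI (ν+1) x))
        / (besselI ν x)^2 := by
    rw [psi]; field_simp
  have h2 : (2*ν+1) * x * psi ν x + (2*ν+2) * (psi ν x)^2
      = ((2*ν+1) * x * (besselI ν x * besselI (ν+1) x)
          + (2*ν+2) * (besselI (ν+1) x * besselI (ν+1) x)) / (besselI ν x)^2 := by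
    rw [psi]; field_simp
  rw [h1, h2, div_le_div_iff₀ hP2 hP2]
  nlinarith [hL, hP2]

end

section limits
variable {ν : ℝ}

lemma tendsto_psi_one (hν : 0 ≤ ν) : Tendsto (fun x => psi ν x) atTop (𝓝 1) := by
  have hlow : ∀ᶠ x in atTop, 1 - ((2*ν+1)/x + (2*ν+2)/x^2) ≤ psi ν x := by
    filter_upwards [eventually_gt_atTop (0:ℝ)] with x hx
    have h1 := psi_ineq_L hx hν
    have h2 := psi_pos hx hν
    have h3 := psi_lt_one hx hν
    have key : x^2 * (1 - psi ν x) ≤ (2*ν+1)*x + (2*ν+2) := by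
      nlinarith [mul_nonneg (mul_nonneg hx.le hx.le) (mul_nonneg h2.le (sub_nonneg.2 h3.le)),
        mul_nonneg (mul_nonneg (show (0:ℝ) ≤ 2*ν+1 by linarith) hx.le) (sub_nonneg.2 h3.le),
        mul_nonneg (show (0:ℝ) ≤ 2*ν+2 by linarith)
          (sub_nonneg.2 (show (psi ν x)^2 ≤ 1 by nlinarith))]
    have e1 : (2*ν+1)/x + (2*ν+2)/x^2 = ((2*ν+1)*x + (2*ν+2))/x^2 := by
      field_simp
    rw [e1]
    have : 1 - psi ν x ≤ ((2*ν+1)*x + (2*ν+2))/x^2 := by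
      rw [le_div_iff₀ (by positivity)]
      nlinarith [key]
    linarith
  have hup : ∀ᶠ x in atTop, psi ν x ≤ 1 := by
    filter_upwards [eventually_gt_atTop (0:ℝ)] with x hx
    exact (psi_lt_one hx hν).le
  have hlim : Tendsto (fun x : ℝ => 1 - ((2*ν+1)/x + (2*ν+2)/x^2)) atTop (𝓝 1) := by
    have t1 : Tendsto (fun x : ℝ => (2*ν+1)/x) atTop (𝓝 0) :=
      tendsto_const_nhds.div_atTop tendsto_id
    have t2 : Tendsto (fun x : ℝ => (2*ν+2)/x^2) atTop (𝓝 0) :=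
      tendsto_const_nhds.div_atTop (tendsto_pow_atTop two_ne_zero)
    have := ((tendsto_const_nhds : Tendsto (fun _ : ℝ => (1:ℝ)) atTop (𝓝 1)).sub (t1.add t2))
    simpa using this
  exact tendsto_of_tendsto_of_tendsto_of_le_of_le' hlim tendsto_const_nhds hlow hup

lemma tendsto_x_one_sub_sq (hν : 0 ≤ ν) :
    Tendsto (fun x => x * (1 - (psi ν x)^2)) atTop (𝓝 (2*ν+1)) := by
  have hlow : ∀ᶠ x in atTop, (2*ν+1) * psi ν x ≤ x * (1 - (psi ν x)^2) := by
    filter_upwards [eventually_gt_atTop (0:ℝ)] with x hx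
    exact psi_ineq_U hx hν
  have hup : ∀ᶠ x in atTop, x * (1 - (psi ν x)^2) ≤ (2*ν+1) * psi ν x + (2*ν+2)/x := by
    filter_upwards [eventually_gt_atTop (0:ℝ)] with x hx
    have h1 := psi_ineq_L hx hν
    have h2 := psi_pos hx hν
    have h3 := psi_lt_one hx hν
    have e : x * ((2*ν+2)/x) = 2*ν+2 := by field_simp
    have key : x * (x * (1 - (psi ν x)^2) - (2*ν+1) * psi ν x - (2*ν+2)/x) ≤ x * 0 := by
      rw [mul_zero]
      have hsq : (0:ℝ) ≤ 1 - (psi ν x)^2 := by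
        have := mul_nonneg (sub_nonneg.2 h3.le) (show (0:ℝ) ≤ 1 + psi ν x by linarith)
        nlinarith [this]
      have hfac : (0:ℝ) ≤ (2*ν+2) * (1 - (psi ν x)^2) := mul_nonneg (by linarith) hsq
      nlinarith [h1, e, hfac]
    have := le_of_mul_le_mul_left key hx
    linarith
  have tlow : Tendsto (fun x => (2*ν+1) * psi ν x) atTop (𝓝 (2*ν+1)) := by
    have := (tendsto_psi_one hν).const_mul (2*ν+1)
    simpa using this
  have tup : Tendsto (fun x => (2*ν+1) * psi ν x + (2*ν+2)/x) atTop (𝓝 (2*ν+1)) := by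
    have t2 : Tendsto (fun x : ℝ => (2*ν+2)/x) atTop (𝓝 0) :=
      tendsto_const_nhds.div_atTop tendsto_id
    have := tlow.add t2
    simpa using this
  exact tendsto_of_tendsto_of_tendsto_of_le_of_le' tlow tup hlow hup

lemma tendsto_xw (hν : 0 ≤ ν) :
    Tendsto (fun x => x * (1 - psi ν x)) atTop (𝓝 (ν+1/2)) := by
  have hden : Tendsto (fun x => 1 + psi ν x) atTop (𝓝 2) := by
    have := (tendsto_const_nhds : Tendsto (fun _ : ℝ => (1:ℝ)) atTop (𝓝 1)).add (tendsto_psi_one hν)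
    norm_num at this
    exact this
  have h := (tendsto_x_one_sub_sq hν).div hden two_ne_zero
  have heq : ∀ᶠ x in atTop, x * (1 - (psi ν x)^2) / (1 + psi ν x) = x * (1 - psi ν x) := by
    filter_upwards [eventually_gt_atTop (0:ℝ)] with x hx
    have h2 := psi_pos hx hν
    have hne : 1 + psi ν x ≠ 0 := by linarith
    field_simp
    ring
  have := h.congr' heq
  convert this using 2
  ring
end limits

lemma log_ratio : Tendsto (fun t : ℝ => Real.log (1+t) / t) (𝓝[≠] (0:ℝ)) (𝓝 1) := by
  have h : HasDerivAt Real.log 1 1 := by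
    simpa using Real.hasDerivAt_log one_ne_zero
  have h2 := hasDerivAt_iff_tendsto_slope.mp h
  have hmap : Tendsto (fun t : ℝ => 1+t) (𝓝[≠] (0:ℝ)) (𝓝[≠] (1:ℝ)) := by
    apply tendsto_nhdsWithin_of_tendsto_nhds_of_eventually_within
    · have : Tendsto (fun t : ℝ => 1+t) (𝓝 (0:ℝ)) (𝓝 (1:ℝ)) := by
        have h4 := Continuous.tendsto (show Continuous fun t : ℝ => 1+t by continuity) 0
        simpa using h4
      exact this.mono_left nhdsWithin_le_nhds
    · filter_upwards [self_mem_nhdsWithin] with t ht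
      simp only [Set.mem_compl_iff, Set.mem_singleton_iff] at ht ⊢
      intro hc
      exact ht (by linarith)
  have h3 := h2.comp hmap
  refine h3.congr fun t => ?_
  simp only [Function.comp_apply, slope_def_field]
  rw [Real.log_one]
  congr 1 <;> ring

theorem stmt_17 (ν : ℝ) (hν : 0 ≤ ν) :
    Filter.Tendsto (fun x : ℝ => Real.log (1 - (2 / x) * psi ν x) / Real.log (psi ν x))
      Filter.atTop (nhds (4 / (2 * ν + 1))) := by
  -- numerator limit
  have hu0 : Tendsto (fun x : ℝ => -((2/x) * psi ν x)) atTop (𝓝 0) := by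
    have t1 : Tendsto (fun x : ℝ => 2/x) atTop (𝓝 0) :=
      tendsto_const_nhds.div_atTop tendsto_id
    have := (t1.mul (tendsto_psi_one hν)).neg
    simpa using this
  have hu : Tendsto (fun x : ℝ => -((2/x) * psi ν x)) atTop (𝓝[≠] (0:ℝ)) := by
    apply tendsto_nhdsWithin_of_tendsto_nhds_of_eventually_within _ hu0
    filter_upwards [eventually_gt_atTop (0:ℝ)] with x hx
    have h2 := psi_pos hx hν
    have : 0 < (2/x) * psi ν x := by positivity
    simp only [Set.mem_compl_iff, Set.mem_singleton_iff]
    intro hc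
    rw [neg_eq_zero] at hc
    linarith
  have hLnum := log_ratio.comp hu
  have hxu : Tendsto (fun x : ℝ => x * -((2/x) * psi ν x)) atTop (𝓝 (-2)) := by
    have h := ((tendsto_psi_one hν).const_mul (-2))
    refine (Tendsto.congr' ?_ h).congr' (Eventually.of_forall fun x => rfl) |>.mono_right ?_
    · filter_upwards [eventually_gt_atTop (0:ℝ)] with x hx
      field_simp
    · rw [show (-2:ℝ) * 1 = -2 by ring]
  have hnum : Tendsto (fun x : ℝ => x * Real.log (1 - (2/x) * psi ν x)) atTop (𝓝 (-2)) := by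
    have hmul := hxu.mul hLnum
    rw [show (-2:ℝ) * 1 = -2 by ring] at hmul
    refine hmul.congr' ?_
    filter_upwards [eventually_gt_atTop (0:ℝ)] with x hx
    have h2 := psi_pos hx hν
    have hne : -((2/x) * psi ν x) ≠ 0 := by
      have : 0 < (2/x) * psi ν x := by positivity
      intro hc; rw [neg_eq_zero] at hc; linarith
    simp only [Function.comp_apply]
    rw [show (1 : ℝ) + -((2/x) * psi ν x) = 1 - (2/x) * psi ν x by ring] at *
    field_simp
  -- denominator limit
  have hv0 : Tendsto (fun x : ℝ => psi ν x - 1) atTop (𝓝 0) := by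
    have := (tendsto_psi_one hν).sub (tendsto_const_nhds : Tendsto (fun _ : ℝ => (1:ℝ)) atTop (𝓝 1))
    simpa using this
  have hv : Tendsto (fun x : ℝ => psi ν x - 1) atTop (𝓝[≠] (0:ℝ)) := by
    apply tendsto_nhdsWithin_of_tendsto_nhds_of_eventually_within _ hv0
    filter_upwards [eventually_gt_atTop (0:ℝ)] with x hx
    have h3 := psi_lt_one hx hν
    simp only [Set.mem_compl_iff, Set.mem_singleton_iff]
    intro hc
    linarith [sub_eq_zero.mp hc]
  have hLden := log_ratio.comp hv
  have hxv : Tendsto (fun x : ℝ => x * (psi ν x - 1)) atTop (𝓝 (-(ν+1/2))) := by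
    have := (tendsto_xw hν).neg
    refine this.congr' ?_
    filter_upwards with x
    ring
  have hden : Tendsto (fun x : ℝ => x * Real.log (psi ν x)) atTop (𝓝 (-(ν+1/2))) := by
    have hmul := hxv.mul hLden
    rw [show (-(ν+1/2):ℝ) * 1 = -(ν+1/2) by ring] at hmul
    refine hmul.congr' ?_
    filter_upwards [eventually_gt_atTop (0:ℝ)] with x hx
    have h3 := psi_lt_one hx hν
    have hne : psi ν x - 1 ≠ 0 := by intro hc; linarith [sub_eq_zero.mp hc]
    simp only [Function.comp_apply]
    rw [show (1 : ℝ) + (psi ν x - 1) = psi ν x by ring]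
    field_simp
  -- combine
  have hne2 : -(ν+1/2) ≠ 0 := by
    intro hc
    have h5 : ν + 1/2 = 0 := by linarith [neg_eq_zero.mp hc]
    linarith
  have hfin := hnum.div hden hne2
  have heq : (-2 : ℝ) / (-(ν+1/2)) = 4 / (2*ν+1) := by
    rw [div_eq_div_iff (by intro hc; norm_num at hc; linarith) (by intro hc; linarith)]
    ring
  rw [heq] at hfin
  refine hfin.congr' ?_
  filter_upwards [eventually_gt_atTop (0:ℝ)] with x hx
  simp only [Pi.div_apply]
  rw [mul_div_mul_left _ _ (ne_of_gt hx)]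
end
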